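/- arXiv:0906.3667 — 6 statements merged into one kernel-verified Lean document; each statement's English description precedes it below -/
import Mathlib

section
/- Let A = (a_{ij}) and B = (b_{ij}) be N×N matrices with nonnegative entries. Then the spectral radius of the entrywise matrix (a_{ij}^{1/2} b_{ij}^{1/2}) is at most ρ(A)^{1/2} ρ(B)^{1/2}. -/
open Matrix

/-- The spectral radius of a square complex matrix: the largest absolute value of its
eigenvalues (roots of the characteristic polynomial). -/
noncomputable def specRad {N : ℕ} (M : Matrix (Fin N) (Fin N) ℂ) : ℝ :=
  sSup {r : ℝ | ∃ μ : ℂ, M.charpoly.IsRoot μ ∧ r = ‖μ‖}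

section SpecRadAux

open Polynomial Filter Real
open scoped NNReal ENNReal Topology

attribute [local instance] Matrix.linftyOpNormedRing Matrix.linftyOpNormedAlgebra

variable {N : ℕ}

local instance specRadAux_completeSpace : CompleteSpace (Matrix (Fin N) (Fin N) ℂ) :=
  inferInstance

private lemma sr_mem_spectrum_iff_isRoot (M : Matrix (Fin N) (Fin N) ℂ) (μ : ℂ) :
    μ ∈ spectrum ℂ M ↔ M.charpoly.IsRoot μ := by
  rw [spectrum.mem_iff, Matrix.isUnit_iff_isUnit_det, isUnit_iff_ne_zero, not_ne_iff]
  have h : M.charpoly.eval μ = (algebraMap ℂ (Matrix (Fin N) (Fin N) ℂ) μ - M).det := by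
    rw [Matrix.charpoly, _root_.eval_det, Matrix.matPolyEquiv_charmatrix, eval_sub, eval_X,
      eval_C]
    rfl
  rw [Polynomial.IsRoot, h]

private lemma sr_set_finite (M : Matrix (Fin N) (Fin N) ℂ) :
    {r : ℝ | ∃ μ : ℂ, M.charpoly.IsRoot μ ∧ r = ‖μ‖}.Finite := by
  have h : {r : ℝ | ∃ μ : ℂ, M.charpoly.IsRoot μ ∧ r = ‖μ‖} =
      (fun μ : ℂ => ‖μ‖) '' {μ : ℂ | M.charpoly.IsRoot μ} := by
    ext r; simp [Set.mem_image, eq_comm]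
  rw [h]
  exact (Polynomial.finite_setOf_isRoot M.charpoly_monic.ne_zero).image _

private lemma sr_abs_le_specRad {M : Matrix (Fin N) (Fin N) ℂ} {μ : ℂ}
    (h : M.charpoly.IsRoot μ) : ‖μ‖ ≤ specRad M :=
  le_csSup (sr_set_finite M).bddAbove ⟨μ, h, rfl⟩

private lemma sr_specRad_nonneg (M : Matrix (Fin N) (Fin N) ℂ) : 0 ≤ specRad M := by
  by_cases h : ∃ μ : ℂ, M.charpoly.IsRoot μ
  · obtain ⟨μ, hμ⟩ := h
    exact (norm_nonneg μ).trans (sr_abs_le_specRad hμ)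
  · have : {r : ℝ | ∃ μ : ℂ, M.charpoly.IsRoot μ ∧ r = ‖μ‖} = ∅ := by
      ext r; simp only [Set.mem_setOf_eq, Set.mem_empty_iff_false, iff_false]
      rintro ⟨μ, hμ, -⟩; exact h ⟨μ, hμ⟩
    rw [specRad, this, Real.sSup_empty]

private lemma sr_spectralRadius_le_ofReal (M : Matrix (Fin N) (Fin N) ℂ) :
    spectralRadius ℂ M ≤ ENNReal.ofReal (specRad M) := by
  refine iSup₂_le fun μ hμ => ?_
  rw [← ENNReal.ofReal_coe_nnreal, coe_nnnorm]
  exact ENNReal.ofReal_le_ofReal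
    (sr_abs_le_specRad ((sr_mem_spectrum_iff_isRoot M μ).mp hμ))

private lemma sr_map_ofReal_pow (M : Matrix (Fin N) (Fin N) ℝ) (k : ℕ) :
    (M.map Complex.ofReal) ^ k = (M ^ k).map Complex.ofReal :=
  (map_pow (Complex.ofRealHom.mapMatrix) M k).symm

private lemma sr_pow_entry_nonneg {A : Matrix (Fin N) (Fin N) ℝ} (hA : ∀ i j, 0 ≤ A i j) :
    ∀ k i j, 0 ≤ (A ^ k) i j := by
  intro k
  induction k with
  | zero => intro i j; simp [Matrix.one_apply]; positivity
  | succ k ih =>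
    intro i j
    rw [pow_succ, Matrix.mul_apply]
    exact Finset.sum_nonneg fun l _ => mul_nonneg (ih i l) (hA l j)

private lemma sr_pow_entry_le {A B : Matrix (Fin N) (Fin N) ℝ} (hA : ∀ i j, 0 ≤ A i j)
    (hB : ∀ i j, 0 ≤ B i j) :
    ∀ k i j, ((Matrix.of fun i j => √(A i j) * √(B i j)) ^ k) i j
      ≤ √((A ^ k) i j) * √((B ^ k) i j) := by
  set C : Matrix (Fin N) (Fin N) ℝ := Matrix.of fun i j => √(A i j) * √(B i j) with hC
  intro k
  induction k with
  | zero =>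
    intro i j
    by_cases h : i = j <;> simp [Matrix.one_apply, h]
  | succ k ih =>
    intro i j
    rw [pow_succ, pow_succ, pow_succ, Matrix.mul_apply]
    calc ∑ l, (C ^ k) i l * C l j
        ≤ ∑ l, √((A ^ k) i l * A l j) * √((B ^ k) i l * B l j) := by
          refine Finset.sum_le_sum fun l _ => ?_
          have h1 : C l j = √(A l j) * √(B l j) := rfl
          calc (C ^ k) i l * C l j
              ≤ (√((A ^ k) i l) * √((B ^ k) i l)) * (√(A l j) * √(B l j)) := by
                rw [h1]
                exact mul_le_mul (ih i l) le_rfl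
                  (mul_nonneg (Real.sqrt_nonneg _) (Real.sqrt_nonneg _))
                  (mul_nonneg (Real.sqrt_nonneg _) (Real.sqrt_nonneg _))
            _ = √((A ^ k) i l * A l j) * √((B ^ k) i l * B l j) := by
                rw [Real.sqrt_mul (sr_pow_entry_nonneg hA k i l),
                  Real.sqrt_mul (sr_pow_entry_nonneg hB k i l)]
                ring
      _ ≤ √(∑ l, (A ^ k) i l * A l j) * √(∑ l, (B ^ k) i l * B l j) :=
          Real.sum_sqrt_mul_sqrt_le _
            (fun l => mul_nonneg (sr_pow_entry_nonneg hA k i l) (hA l j))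
            (fun l => mul_nonneg (sr_pow_entry_nonneg hB k i l) (hB l j))
      _ = √(((A ^ k) * A) i j) * √(((B ^ k) * B) i j) := by
          rw [Matrix.mul_apply, Matrix.mul_apply]

private lemma sr_row_sum_le_nnnorm {M : Matrix (Fin N) (Fin N) ℝ}
    (hM : ∀ i j : Fin N, 0 ≤ M i j) (i : Fin N) :
    ∑ j, M i j ≤ ((‖M.map Complex.ofReal‖₊ : ℝ≥0) : ℝ) := by
  have h1 : ∀ j, ‖(M.map Complex.ofReal) i j‖₊ = ‖M i j‖₊ := fun j => Complex.nnnorm_real _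
  have h2 : (∑ j, ‖(M.map Complex.ofReal) i j‖₊ : ℝ≥0) ≤ ‖M.map Complex.ofReal‖₊ := by
    rw [Matrix.linfty_opNNNorm_def]
    exact Finset.le_sup (f := fun i => ∑ j, ‖(M.map Complex.ofReal) i j‖₊) (Finset.mem_univ i)
  calc ∑ j, M i j = ((∑ j, ‖(M.map Complex.ofReal) i j‖₊ : ℝ≥0) : ℝ) := by
        push_cast [h1]
        exact Finset.sum_congr rfl fun j _ => (Real.norm_of_nonneg (hM i j)).symm
    _ ≤ _ := h2

private lemma sr_nnnorm_pow_le {A B : Matrix (Fin N) (Fin N) ℝ} (hA : ∀ i j, 0 ≤ A i j)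
    (hB : ∀ i j, 0 ≤ B i j) (k : ℕ) :
    ‖((Matrix.of fun i j => √(A i j) * √(B i j)).map Complex.ofReal) ^ k‖₊
      ≤ NNReal.sqrt ‖(A.map Complex.ofReal) ^ k‖₊ *
        NNReal.sqrt ‖(B.map Complex.ofReal) ^ k‖₊ := by
  set C : Matrix (Fin N) (Fin N) ℝ := Matrix.of fun i j => √(A i j) * √(B i j) with hCdef
  have hC : ∀ i j : Fin N, 0 ≤ C i j :=
    fun i j => mul_nonneg (Real.sqrt_nonneg _) (Real.sqrt_nonneg _)
  rw [sr_map_ofReal_pow, sr_map_ofReal_pow, sr_map_ofReal_pow]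
  rw [Matrix.linfty_opNNNorm_def]
  refine Finset.sup_le fun i _ => ?_
  rw [← NNReal.coe_le_coe]
  have h1 : ∀ j, ‖((C ^ k).map Complex.ofReal) i j‖₊ = ‖(C ^ k) i j‖₊ :=
    fun j => Complex.nnnorm_real _
  calc ((∑ j, ‖((C ^ k).map Complex.ofReal) i j‖₊ : ℝ≥0) : ℝ)
      = ∑ j, (C ^ k) i j := by
        push_cast [h1]
        exact Finset.sum_congr rfl fun j _ =>
          Real.norm_of_nonneg (sr_pow_entry_nonneg hC k i j)
    _ ≤ ∑ j, √((A ^ k) i j) * √((B ^ k) i j) :=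
        Finset.sum_le_sum fun j _ => sr_pow_entry_le hA hB k i j
    _ ≤ √(∑ j, (A ^ k) i j) * √(∑ j, (B ^ k) i j) :=
        Real.sum_sqrt_mul_sqrt_le _ (fun j => sr_pow_entry_nonneg hA k i j)
          (fun j => sr_pow_entry_nonneg hB k i j)
    _ ≤ √((‖(A ^ k).map Complex.ofReal‖₊ : ℝ)) * √((‖(B ^ k).map Complex.ofReal‖₊ : ℝ)) := by
        have hA' := sr_row_sum_le_nnnorm (sr_pow_entry_nonneg hA k) i
        have hB' := sr_row_sum_le_nnnorm (sr_pow_entry_nonneg hB k) i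
        gcongr
    _ = ((NNReal.sqrt ‖(A ^ k).map Complex.ofReal‖₊ *
          NNReal.sqrt ‖(B ^ k).map Complex.ofReal‖₊ : ℝ≥0) : ℝ) := by
        push_cast [Real.coe_sqrt]
        ring

private lemma sr_spectralRadius_le {A B : Matrix (Fin N) (Fin N) ℝ} (hN : 0 < N)
    (hA : ∀ i j, 0 ≤ A i j) (hB : ∀ i j, 0 ≤ B i j) :
    spectralRadius ℂ ((Matrix.of fun i j => √(A i j) * √(B i j)).map Complex.ofReal)
      ≤ (spectralRadius ℂ (A.map Complex.ofReal)) ^ (1/2 : ℝ) *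
        (spectralRadius ℂ (B.map Complex.ofReal)) ^ (1/2 : ℝ) := by
  haveI : Nonempty (Fin N) := ⟨⟨0, hN⟩⟩
  set A' := A.map Complex.ofReal
  set B' := B.map Complex.ofReal
  set C' := (Matrix.of fun i j => √(A i j) * √(B i j)).map Complex.ofReal with hC'
  set u : ℕ → ℝ≥0∞ := fun n => (‖A' ^ (n+1)‖₊ : ℝ≥0∞) ^ (1 / ((n:ℝ)+1)) with hu
  set v : ℕ → ℝ≥0∞ := fun n => (‖B' ^ (n+1)‖₊ : ℝ≥0∞) ^ (1 / ((n:ℝ)+1)) with hv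
  have key : ∀ n : ℕ, spectralRadius ℂ C' ≤ u n ^ (1/2 : ℝ) * v n ^ (1/2 : ℝ) := by
    intro n
    have h1 := spectrum.spectralRadius_le_pow_nnnorm_pow_one_div ℂ C' n
    rw [nnnorm_one, ENNReal.coe_one, ENNReal.one_rpow, mul_one] at h1
    refine h1.trans ?_
    calc (‖C' ^ (n+1)‖₊ : ℝ≥0∞) ^ (1 / ((n:ℝ)+1))
        ≤ ((NNReal.sqrt ‖A' ^ (n+1)‖₊ * NNReal.sqrt ‖B' ^ (n+1)‖₊ : ℝ≥0) : ℝ≥0∞)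
            ^ (1 / ((n:ℝ)+1)) := by
          apply ENNReal.rpow_le_rpow _ (by positivity)
          exact_mod_cast sr_nnnorm_pow_le hA hB (n+1)
      _ = u n ^ (1/2 : ℝ) * v n ^ (1/2 : ℝ) := by
          rw [ENNReal.coe_mul, ENNReal.mul_rpow_of_nonneg _ _ (by positivity)]
          congr 1 <;>
          · rw [NNReal.sqrt_eq_rpow, ENNReal.coe_rpow_of_nonneg _ (by norm_num : (0:ℝ) ≤ 1/2),
              ← ENNReal.rpow_mul, ← ENNReal.rpow_mul, mul_comm]
  have huA : Tendsto u atTop (𝓝 (spectralRadius ℂ A')) := by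
    have := (spectrum.pow_nnnorm_pow_one_div_tendsto_nhds_spectralRadius A').comp
      (tendsto_add_atTop_nat 1)
    refine this.congr fun n => ?_
    simp only [Function.comp_apply, hu]
    push_cast
    ring_nf
  have hvB : Tendsto v atTop (𝓝 (spectralRadius ℂ B')) := by
    have := (spectrum.pow_nnnorm_pow_one_div_tendsto_nhds_spectralRadius B').comp
      (tendsto_add_atTop_nat 1)
    refine this.congr fun n => ?_
    simp only [Function.comp_apply, hv]
    push_cast
    ring_nf
  have hAne : spectralRadius ℂ A' ^ (1/2 : ℝ) ≠ ⊤ :=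
    ENNReal.rpow_ne_top_of_nonneg (by norm_num)
      (ne_top_of_le_ne_top ENNReal.coe_ne_top (spectrum.spectralRadius_le_nnnorm (𝕜 := ℂ) A'))
  have hBne : spectralRadius ℂ B' ^ (1/2 : ℝ) ≠ ⊤ :=
    ENNReal.rpow_ne_top_of_nonneg (by norm_num)
      (ne_top_of_le_ne_top ENNReal.coe_ne_top (spectrum.spectralRadius_le_nnnorm (𝕜 := ℂ) B'))
  have hw : Tendsto (fun n => u n ^ (1/2 : ℝ) * v n ^ (1/2 : ℝ)) atTop
      (𝓝 (spectralRadius ℂ A' ^ (1/2 : ℝ) * spectralRadius ℂ B' ^ (1/2 : ℝ))) :=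
    ENNReal.Tendsto.mul (huA.ennrpow_const _) (Or.inr hBne) (hvB.ennrpow_const _) (Or.inr hAne)
  exact ge_of_tendsto' hw key

theorem specRad_entrywise_sqrt_le {N : ℕ} (A B : Matrix (Fin N) (Fin N) ℝ)
    (hA : ∀ i j, 0 ≤ A i j) (hB : ∀ i j, 0 ≤ B i j) :
    specRad ((Matrix.of fun i j => Real.sqrt (A i j) * Real.sqrt (B i j)).map Complex.ofReal)
      ≤ Real.sqrt (specRad (A.map Complex.ofReal)) *
        Real.sqrt (specRad (B.map Complex.ofReal)) := by
  have hrhs : 0 ≤ √(specRad (A.map Complex.ofReal)) * √(specRad (B.map Complex.ofReal)) :=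
    mul_nonneg (Real.sqrt_nonneg _) (Real.sqrt_nonneg _)
  refine Real.sSup_le ?_ hrhs
  rintro r ⟨μ, hμ, rfl⟩
  rcases Nat.eq_zero_or_pos N with h0 | hN
  · exfalso
    subst h0
    have h1 : ((Matrix.of fun i j => Real.sqrt (A i j) * Real.sqrt (B i j)).map
        Complex.ofReal).charpoly = 1 := by
      rw [Matrix.charpoly, Matrix.det_isEmpty]
    rw [h1] at hμ
    simp at hμ
  · have hμs : μ ∈ spectrum ℂ ((Matrix.of fun i j => Real.sqrt (A i j) * Real.sqrt (B i j)).map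
        Complex.ofReal) := (sr_mem_spectrum_iff_isRoot _ μ).mpr hμ
    have h1 : (‖μ‖₊ : ℝ≥0∞) ≤ spectralRadius ℂ
        ((Matrix.of fun i j => Real.sqrt (A i j) * Real.sqrt (B i j)).map Complex.ofReal) :=
      le_iSup₂ (f := fun (k : ℂ) (_ : k ∈ spectrum ℂ _) => (‖k‖₊ : ℝ≥0∞)) μ hμs
    have h2 := sr_spectralRadius_le hN hA hB
    have h3 := sr_spectralRadius_le_ofReal (A.map Complex.ofReal)
    have h4 := sr_spectralRadius_le_ofReal (B.map Complex.ofReal)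
    have h5 : (‖μ‖₊ : ℝ≥0∞) ≤ ENNReal.ofReal
        (√(specRad (A.map Complex.ofReal)) * √(specRad (B.map Complex.ofReal))) := by
      refine (h1.trans (h2.trans ?_))
      rw [ENNReal.ofReal_mul (Real.sqrt_nonneg _)]
      gcongr
      · rw [Real.sqrt_eq_rpow, ← ENNReal.ofReal_rpow_of_nonneg
          (sr_specRad_nonneg _) (by norm_num : (0:ℝ) ≤ 1/2)]
        exact ENNReal.rpow_le_rpow h3 (by norm_num)
      · rw [Real.sqrt_eq_rpow, ← ENNReal.ofReal_rpow_of_nonneg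
          (sr_specRad_nonneg _) (by norm_num : (0:ℝ) ≤ 1/2)]
        exact ENNReal.rpow_le_rpow h4 (by norm_num)
    rw [← ENNReal.ofReal_coe_nnreal, coe_nnnorm] at h5
    have := (ENNReal.ofReal_le_ofReal_iff hrhs).mp h5
    simpa using this

end SpecRadAux
end

section
/- Let A (m×n) and B (n×p) be complex matrices, and let s_i^M denote the i-th largest singular value of M (0 when i > rank(M)). Then for all nonnegative integers m, n: s_{m+n+1}^{AB} ≤ s_{m+1}^A · s_{n+1}^B. -/
open Matrix
open scoped ComplexOrder

/-- The `i`-th largest singular value (1-indexed) of a rectangular complex matrix,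
defined to be `0` when `i` is out of range (in particular when `i > rank M`). -/
noncomputable def sv {p q : ℕ} (M : Matrix (Fin p) (Fin q) ℂ) (i : ℕ) : ℝ :=
  if h : 1 ≤ i ∧ i ≤ q then
    Real.sqrt ((Matrix.posSemidef_conjTranspose_mul_self M).1.eigenvalues
      (Tuple.sort ((Matrix.posSemidef_conjTranspose_mul_self M).1.eigenvalues)
        ⟨q - i, by omega⟩))
  else 0

namespace KyFanAux

open Finset Submodule Module

lemma sv_nonneg {p q : ℕ} (M : Matrix (Fin p) (Fin q) ℂ) (i : ℕ) : 0 ≤ sv M i := by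
  unfold sv; split
  · exact Real.sqrt_nonneg _
  · exact le_refl 0

lemma toEuclideanLin_mul {p q r : ℕ} (A : Matrix (Fin p) (Fin q) ℂ)
    (B : Matrix (Fin q) (Fin r) ℂ) :
    toEuclideanLin (A * B) = (toEuclideanLin A).comp (toEuclideanLin B) := by
  ext x; simp [toEuclideanLin_apply, mulVec_mulVec]

lemma toEuclideanLin_eigenvector {q : ℕ} {H : Matrix (Fin q) (Fin q) ℂ} (hH : H.IsHermitian)
    (j : Fin q) :
    toEuclideanLin H (hH.eigenvectorBasis j) = (hH.eigenvalues j : ℂ) • hH.eigenvectorBasis j := by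
  have := hH.mulVec_eigenvectorBasis j
  ext i
  simp only [toEuclideanLin_apply]
  rw [this]
  simp only [Pi.smul_apply, PiLp.smul_apply, smul_eq_mul,
    Complex.real_smul]

lemma repr_toEuclideanLin {q : ℕ} {H : Matrix (Fin q) (Fin q) ℂ} (hH : H.IsHermitian)
    (x : EuclideanSpace ℂ (Fin q)) (j : Fin q) :
    hH.eigenvectorBasis.repr (toEuclideanLin H x) j
      = (hH.eigenvalues j : ℂ) * hH.eigenvectorBasis.repr x j := by
  rw [OrthonormalBasis.repr_apply_apply, OrthonormalBasis.repr_apply_apply,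
    ← LinearMap.adjoint_inner_left, ← Matrix.toEuclideanLin_conjTranspose_eq_adjoint,
    hH.eq, toEuclideanLin_eigenvector hH j, inner_smul_left]
  simp

lemma normsq_eq_sum {p q : ℕ} (M : Matrix (Fin p) (Fin q) ℂ) (x : EuclideanSpace ℂ (Fin q)) :
    ‖toEuclideanLin M x‖ ^ 2 =
      ∑ j, (Matrix.posSemidef_conjTranspose_mul_self M).1.eigenvalues j *
        ‖(Matrix.posSemidef_conjTranspose_mul_self M).1.eigenvectorBasis.repr x j‖ ^ 2 := by
  set hH := (Matrix.posSemidef_conjTranspose_mul_self M).1 with hdef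
  have h1 : (‖toEuclideanLin M x‖ ^ 2 : ℝ)
      = RCLike.re (inner (𝕜 := ℂ) x (toEuclideanLin (Mᴴ * M) x)) := by
    rw [toEuclideanLin_mul, LinearMap.comp_apply,
      Matrix.toEuclideanLin_conjTranspose_eq_adjoint, LinearMap.adjoint_inner_right]
    rw [← @inner_self_eq_norm_sq ℂ]
  rw [h1, ← hH.eigenvectorBasis.repr.inner_map_map x (toEuclideanLin (Mᴴ * M) x)]
  rw [PiLp.inner_apply]
  rw [map_sum]
  apply Finset.sum_congr rfl
  intro j _
  rw [repr_toEuclideanLin hH x j]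
  simp only [RCLike.inner_apply]
  rw [show (hH.eigenvalues j : ℂ) * hH.eigenvectorBasis.repr x j *
      (starRingEnd ℂ) (hH.eigenvectorBasis.repr x j) = (hH.eigenvalues j : ℂ) *
      ((starRingEnd ℂ) (hH.eigenvectorBasis.repr x j) * hH.eigenvectorBasis.repr x j) by ring,
    RCLike.conj_mul]
  rw [← RCLike.ofReal_pow]
  simp [RCLike.mul_re]
  left
  rw [← Complex.ofReal_pow]
  exact Complex.ofReal_re _

lemma normsq_parseval {q : ℕ} {E : Type*} [NormedAddCommGroup E] [InnerProductSpace ℂ E]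
    (v : OrthonormalBasis (Fin q) ℂ E) (x : E) :
    ‖x‖ ^ 2 = ∑ j, ‖v.repr x j‖ ^ 2 := by
  rw [← v.repr.norm_map x, PiLp.norm_sq_eq_of_L2]

lemma repr_eq_zero_of_mem_span {q : ℕ} {E : Type*} [NormedAddCommGroup E]
    [InnerProductSpace ℂ E] (v : OrthonormalBasis (Fin q) ℂ E) (S : Set (Fin q))
    {x : E} (hx : x ∈ Submodule.span ℂ (v '' S)) {j : Fin q} (hj : j ∉ S) :
    v.repr x j = 0 := by
  induction hx using Submodule.span_induction with
  | mem y hy =>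
    obtain ⟨i, hi, rfl⟩ := hy
    rw [OrthonormalBasis.repr_self, EuclideanSpace.single_apply,
      if_neg (fun h => hj (by rw [h]; exact hi))]
  | zero => simp
  | add y z _ _ hy hz => simp [hy, hz]
  | smul a y _ hy => simp [hy]

lemma quad_le {p q : ℕ} (M : Matrix (Fin p) (Fin q) ℂ) (c : ℝ)
    (x : EuclideanSpace ℂ (Fin q))
    (h : ∀ j, (Matrix.posSemidef_conjTranspose_mul_self M).1.eigenvalues j ≤ c ∨
      (Matrix.posSemidef_conjTranspose_mul_self M).1.eigenvectorBasis.repr x j = 0) :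
    ‖toEuclideanLin M x‖ ^ 2 ≤ c * ‖x‖ ^ 2 := by
  rw [normsq_eq_sum, normsq_parseval (Matrix.posSemidef_conjTranspose_mul_self M).1.eigenvectorBasis
    x, Finset.mul_sum]
  apply Finset.sum_le_sum
  intro j _
  rcases h j with h | h
  · exact mul_le_mul_of_nonneg_right h (by positivity)
  · simp [h]

lemma quad_ge {p q : ℕ} (M : Matrix (Fin p) (Fin q) ℂ) (c : ℝ)
    (x : EuclideanSpace ℂ (Fin q))
    (h : ∀ j, c ≤ (Matrix.posSemidef_conjTranspose_mul_self M).1.eigenvalues j ∨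
      (Matrix.posSemidef_conjTranspose_mul_self M).1.eigenvectorBasis.repr x j = 0) :
    c * ‖x‖ ^ 2 ≤ ‖toEuclideanLin M x‖ ^ 2 := by
  rw [normsq_eq_sum, normsq_parseval (Matrix.posSemidef_conjTranspose_mul_self M).1.eigenvectorBasis
    x, Finset.mul_sum]
  apply Finset.sum_le_sum
  intro j _
  rcases h j with h | h
  · exact mul_le_mul_of_nonneg_right h (by positivity)
  · simp [h]

lemma card_le_finrank_span {q : ℕ} {E : Type*} [NormedAddCommGroup E]
    [InnerProductSpace ℂ E] (v : OrthonormalBasis (Fin q) ℂ E) (S : Finset (Fin q)) :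
    S.card ≤ finrank ℂ (Submodule.span ℂ (⇑v '' ↑S)) := by
  classical
  have hinj : Function.Injective ⇑v := v.toBasis.injective
  have hcoe : (⇑v '' ↑S) = ↑(S.image ⇑v) := by rw [Finset.coe_image]
  rw [hcoe, finrank_span_finset_eq_card ?_, Finset.card_image_of_injective _ hinj]
  exact (LinearIndependent.linearIndepOn_id v.orthonormal.linearIndependent).mono (fun y hy => by
    obtain ⟨i, _, rfl⟩ := Finset.mem_image.mp hy
    exact Set.mem_range_self i)

lemma finrank_comap_add_ge {E F : Type*} [AddCommGroup E] [Module ℂ E] [AddCommGroup F]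
    [Module ℂ F] [FiniteDimensional ℂ E] [FiniteDimensional ℂ F]
    (f : E →ₗ[ℂ] F) (V : Submodule ℂ F) :
    finrank ℂ E + finrank ℂ V ≤ finrank ℂ (V.comap f) + finrank ℂ F := by
  have h1 := LinearMap.finrank_range_add_finrank_ker (V.mkQ.comp f)
  have h2 : finrank ℂ (LinearMap.range (V.mkQ.comp f)) ≤ finrank ℂ (F ⧸ V) :=
    (LinearMap.range (V.mkQ.comp f)).finrank_le
  have h3 := Submodule.finrank_quotient_add_finrank V
  rw [LinearMap.ker_comp, Submodule.ker_mkQ] at h1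
  omega

end KyFanAux

namespace KyFanAux

open Finset Submodule Module

lemma count_ge {q : ℕ} (f : Fin q → ℝ) (k : ℕ) (h1 : 1 ≤ k) (hk : k ≤ q) :
    k ≤ (Finset.univ.filter fun i => f (Tuple.sort f ⟨q - k, by omega⟩) ≤ f i).card := by
  classical
  have key := Finset.card_le_card_of_injOn
    (s := (Finset.univ : Finset (Fin k)))
    (t := Finset.univ.filter fun i => f (Tuple.sort f ⟨q - k, by omega⟩) ≤ f i)
    (fun l : Fin k => Tuple.sort f ⟨q - k + l.1, by have := l.2; omega⟩) ?_ ?_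
  · simpa using key
  · intro l _
    refine Finset.mem_filter.mpr ⟨Finset.mem_univ _, ?_⟩
    exact Tuple.monotone_sort f (Fin.mk_le_mk.mpr (Nat.le_add_right _ _))
  · intro a _ b _ h
    have h2 := congrArg Fin.val ((Tuple.sort f).injective h)
    simp only at h2
    exact Fin.ext (by omega)

lemma count_le {q : ℕ} (f : Fin q → ℝ) (k : ℕ) (h1 : 1 ≤ k) (hk : k ≤ q) :
    q - k + 1 ≤ (Finset.univ.filter fun i => f i ≤ f (Tuple.sort f ⟨q - k, by omega⟩)).card := by
  classical
  have key := Finset.card_le_card_of_injOn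
    (s := (Finset.univ : Finset (Fin (q - k + 1))))
    (t := Finset.univ.filter fun i => f i ≤ f (Tuple.sort f ⟨q - k, by omega⟩))
    (fun l : Fin (q - k + 1) => Tuple.sort f ⟨l.1, by have := l.2; omega⟩) ?_ ?_
  · simpa using key
  · intro l _
    refine Finset.mem_filter.mpr ⟨Finset.mem_univ _, ?_⟩
    exact Tuple.monotone_sort f (Fin.mk_le_mk.mpr (by have := l.2; omega))
  · intro a _ b _ h
    have h2 := congrArg Fin.val ((Tuple.sort f).injective h)
    simp only at h2
    exact Fin.ext (by omega)

lemma sv_eq {p q : ℕ} (M : Matrix (Fin p) (Fin q) ℂ) (i : ℕ) (h1 : 1 ≤ i) (h2 : i ≤ q) :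
    sv M i = Real.sqrt ((Matrix.posSemidef_conjTranspose_mul_self M).1.eigenvalues
      (Tuple.sort ((Matrix.posSemidef_conjTranspose_mul_self M).1.eigenvalues)
        ⟨q - i, by omega⟩)) := by
  rw [sv, dif_pos ⟨h1, h2⟩]

end KyFanAux

open KyFanAux Finset Submodule Module in
/-- Ky Fan singular value inequality for products. -/
theorem sv_mul_le {p q r : ℕ} (A : Matrix (Fin p) (Fin q) ℂ) (B : Matrix (Fin q) (Fin r) ℂ)
    (m n : ℕ) :
    sv (A * B) (m + n + 1) ≤ sv A (m + 1) * sv B (n + 1) := by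
  classical
  by_cases hmn : m + n + 1 ≤ r
  swap
  · rw [sv, dif_neg (by omega)]
    exact mul_nonneg (sv_nonneg _ _) (sv_nonneg _ _)
  by_cases hm : m + 1 ≤ q
  swap
  · -- m ≥ q : both sides are zero
    have hA0 : sv A (m + 1) = 0 := by rw [sv, dif_neg (by omega)]
    have hP := Matrix.posSemidef_conjTranspose_mul_self (A * B)
    have hLHS : sv (A * B) (m + n + 1) = 0 := by
      rw [sv_eq _ _ (by omega) hmn]
      set μ := hP.1.eigenvalues with hμ
      have hnn : 0 ≤ μ (Tuple.sort μ ⟨r - (m + n + 1), by omega⟩) := hP.eigenvalues_nonneg _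
      rcases eq_or_lt_of_le hnn with h | h
      · rw [← h, Real.sqrt_zero]
      · exfalso
        have hrank : (A * B).rank ≤ q :=
          le_trans (Matrix.rank_mul_le_left A B) (Matrix.rank_le_width A)
        have hcard : Fintype.card {i // μ i ≠ 0} ≤ q := by
          have hcc := hP.1.rank_eq_card_non_zero_eigs
          rw [Matrix.rank_conjTranspose_mul_self] at hcc
          rw [← hμ] at hcc
          omega
        have hinj : Function.Injective (fun l : Fin (m + n + 1) =>
            (⟨Tuple.sort μ ⟨r - (m + n + 1) + l.1, by have := l.2; omega⟩, by
              have hmono : μ (Tuple.sort μ ⟨r - (m + n + 1), by omega⟩) ≤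
                  μ (Tuple.sort μ ⟨r - (m + n + 1) + l.1, by have := l.2; omega⟩) :=
                Tuple.monotone_sort μ (Fin.mk_le_mk.mpr (Nat.le_add_right _ _))
              exact (lt_of_lt_of_le h hmono).ne'⟩ : {i // μ i ≠ 0})) := by
          intro a b hab
          have h2 := congrArg Fin.val ((Tuple.sort μ).injective (congrArg Subtype.val hab))
          simp only at h2
          exact Fin.ext (by omega)
        have := Fintype.card_le_of_injective _ hinj
        simp only [Fintype.card_fin] at this
        omega
    rw [hLHS, hA0, zero_mul]
  · -- main case
    have hn : n + 1 ≤ r := by omega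
    have hPA := Matrix.posSemidef_conjTranspose_mul_self A
    have hPB := Matrix.posSemidef_conjTranspose_mul_self B
    have hPC := Matrix.posSemidef_conjTranspose_mul_self (A * B)
    rw [sv_eq _ _ (by omega) hmn, sv_eq _ _ (by omega) hm, sv_eq _ _ (by omega) hn]
    set μA := hPA.1.eigenvalues with hμA
    set μB := hPB.1.eigenvalues with hμB
    set μC := hPC.1.eigenvalues with hμC
    set tA := μA (Tuple.sort μA ⟨q - (m + 1), by omega⟩) with htA
    set tB := μB (Tuple.sort μB ⟨r - (n + 1), by omega⟩) with htB
    set tC := μC (Tuple.sort μC ⟨r - (m + n + 1), by omega⟩) with htC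
    have htA0 : 0 ≤ tA := hPA.eigenvalues_nonneg _
    have htB0 : 0 ≤ tB := hPB.eigenvalues_nonneg _
    rw [← Real.sqrt_mul htA0]
    apply Real.sqrt_le_sqrt
    -- key inequality tC ≤ tA * tB
    set vA := hPA.1.eigenvectorBasis with hvA
    set vB := hPB.1.eigenvectorBasis with hvB
    set vC := hPC.1.eigenvectorBasis with hvC
    set SA : Finset (Fin q) := Finset.univ.filter (fun i => μA i ≤ tA) with hSA
    set SB : Finset (Fin r) := Finset.univ.filter (fun i => μB i ≤ tB) with hSB
    set SC : Finset (Fin r) := Finset.univ.filter (fun i => tC ≤ μC i) with hSC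
    set VA : Submodule ℂ (EuclideanSpace ℂ (Fin q)) := Submodule.span ℂ (⇑vA '' ↑SA) with hVA
    set W1 : Submodule ℂ (EuclideanSpace ℂ (Fin r)) := Submodule.span ℂ (⇑vB '' ↑SB) with hW1
    set U : Submodule ℂ (EuclideanSpace ℂ (Fin r)) := Submodule.span ℂ (⇑vC '' ↑SC) with hU
    set W2 : Submodule ℂ (EuclideanSpace ℂ (Fin r)) := VA.comap (toEuclideanLin B) with hW2
    have hdimVA : q - (m + 1) + 1 ≤ finrank ℂ VA :=
      le_trans (count_le μA (m + 1) (by omega) hm) (card_le_finrank_span vA SA)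
    have hdimW1 : r - (n + 1) + 1 ≤ finrank ℂ W1 :=
      le_trans (count_le μB (n + 1) (by omega) hn) (card_le_finrank_span vB SB)
    have hdimU : m + n + 1 ≤ finrank ℂ U :=
      le_trans (count_ge μC (m + n + 1) (by omega) hmn) (card_le_finrank_span vC SC)
    have hdimW2 : r + finrank ℂ VA ≤ finrank ℂ W2 + q := by
      have := finrank_comap_add_ge (toEuclideanLin B) VA
      rwa [finrank_euclideanSpace_fin, finrank_euclideanSpace_fin] at this
    have hsup : finrank ℂ ↥(W1 ⊔ W2) + finrank ℂ ↥(W1 ⊓ W2) = finrank ℂ W1 + finrank ℂ W2 :=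
      Submodule.finrank_sup_add_finrank_inf_eq W1 W2
    have hsuple : finrank ℂ ↥(W1 ⊔ W2) ≤ r := by
      have := (W1 ⊔ W2).finrank_le
      rwa [finrank_euclideanSpace_fin] at this
    have hbot : U ⊓ (W1 ⊓ W2) ≠ ⊥ := by
      intro hb
      have := Submodule.finrank_add_finrank_le_of_disjoint (disjoint_iff.mpr hb)
      rw [finrank_euclideanSpace_fin] at this
      omega
    obtain ⟨x, hx, hx0⟩ := Submodule.exists_mem_ne_zero_of_ne_bot hbot
    have hxU : x ∈ U := hx.1
    have hxW1 : x ∈ W1 := hx.2.1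
    have hxW2 : toEuclideanLin B x ∈ VA := Submodule.mem_comap.mp hx.2.2
    have hge : tC * ‖x‖ ^ 2 ≤ ‖toEuclideanLin (A * B) x‖ ^ 2 := by
      apply quad_ge
      intro j
      by_cases hj : j ∈ SC
      · exact Or.inl (Finset.mem_filter.mp hj).2
      · exact Or.inr (repr_eq_zero_of_mem_span vC _ hxU (by simpa using hj))
    have hAle : ‖toEuclideanLin A (toEuclideanLin B x)‖ ^ 2 ≤ tA * ‖toEuclideanLin B x‖ ^ 2 := by
      apply quad_le
      intro j
      by_cases hj : j ∈ SA
      · exact Or.inl (Finset.mem_filter.mp hj).2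
      · exact Or.inr (repr_eq_zero_of_mem_span vA _ hxW2 (by simpa using hj))
    have hBle : ‖toEuclideanLin B x‖ ^ 2 ≤ tB * ‖x‖ ^ 2 := by
      apply quad_le
      intro j
      by_cases hj : j ∈ SB
      · exact Or.inl (Finset.mem_filter.mp hj).2
      · exact Or.inr (repr_eq_zero_of_mem_span vB _ hxW1 (by simpa using hj))
    have hcomp : toEuclideanLin (A * B) x = toEuclideanLin A (toEuclideanLin B x) := by
      rw [toEuclideanLin_mul]; rfl
    have hchain : tC * ‖x‖ ^ 2 ≤ (tA * tB) * ‖x‖ ^ 2 := by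
      calc tC * ‖x‖ ^ 2 ≤ ‖toEuclideanLin (A * B) x‖ ^ 2 := hge
        _ = ‖toEuclideanLin A (toEuclideanLin B x)‖ ^ 2 := by rw [hcomp]
        _ ≤ tA * ‖toEuclideanLin B x‖ ^ 2 := hAle
        _ ≤ tA * (tB * ‖x‖ ^ 2) := mul_le_mul_of_nonneg_left hBle htA0
        _ = (tA * tB) * ‖x‖ ^ 2 := by ring
    have hxpos : 0 < ‖x‖ ^ 2 := pow_pos (norm_pos_iff.mpr hx0) 2
    exact le_of_mul_le_mul_right hchain hxpos
end

section
/- Let A_1, …, A_K be rectangular complex matrices of the same size and r ≥ 0 an integer. Then s_{Kr+1}^{A_1+⋯+A_K} ≤ s_{r+1}^{A_1} + ⋯ + s_{r+1}^{A_K}, where s_i^M is the i-th largest singular value of M (0 for i > rank M). -/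
open Matrix
open scoped ComplexOrder

open scoped InnerProductSpace

namespace SVAux


variable {p q : ℕ}

abbrev Eu (q : ℕ) := EuclideanSpace ℂ (Fin q)

/-- quadratic form of `MᴴM` is the squared norm of `Mx`. -/
lemma quad_eq (M : Matrix (Fin p) (Fin q) ℂ) (x : Eu q) :
    (inner ℂ x (toEuclideanLin (Mᴴ * M) x) : ℂ)
      = inner ℂ (toEuclideanLin M x) (toEuclideanLin M x) := by
  rw [EuclideanSpace.inner_eq_star_dotProduct, EuclideanSpace.inner_eq_star_dotProduct]
  simp only [ofLp_toEuclideanLin_apply, ← mulVec_mulVec]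
  rw [dotProduct_comm, dotProduct_mulVec, ← star_mulVec, dotProduct_comm]



lemma re_inner_eq_sum (b : OrthonormalBasis (Fin q) ℂ (Eu q)) (T : (Eu q) →ₗ[ℂ] (Eu q))
    (μ : Fin q → ℝ) (hT : ∀ j, T (b j) = (μ j : ℂ) • b j) (x : Eu q) :
    Complex.re (inner ℂ x (T x)) = ∑ j, μ j * ‖b.repr x j‖ ^ 2 := by
  have hTx : T x = ∑ j, (b.repr x j * (μ j : ℂ)) • b j := by
    conv_lhs => rw [← b.sum_repr x]
    rw [map_sum]
    refine Finset.sum_congr rfl fun j _ => ?_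
    rw [_root_.map_smul, hT j, smul_smul]
  rw [hTx, inner_sum]
  simp_rw [inner_smul_right]
  rw [Complex.re_sum]
  refine Finset.sum_congr rfl fun j _ => ?_
  have hz : (inner ℂ x (b j) : ℂ) = starRingEnd ℂ (b.repr x j) := by
    rw [← inner_conj_symm, b.repr_apply_apply]
  rw [hz]
  have : b.repr x j * (μ j : ℂ) * starRingEnd ℂ (b.repr x j)
      = ((μ j * ‖b.repr x j‖ ^ 2 : ℝ) : ℂ) := by
    rw [mul_right_comm, mul_comm (b.repr x j), RCLike.conj_mul]
    push_cast
    exact mul_comm _ _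
  rw [this, Complex.ofReal_re]

lemma inner_self_re (x : Eu p) : (inner ℂ x x : ℂ).re = ‖x‖ ^ 2 := by
  rw [@inner_self_eq_norm_sq_to_K ℂ]
  norm_cast

lemma repr_eq_zero_of_mem_span (b : OrthonormalBasis (Fin q) ℂ (Eu q)) (s : Set (Fin q))
    {x : Eu q} (hx : x ∈ Submodule.span ℂ (b '' s)) {j : Fin q} (hj : j ∉ s) :
    b.repr x j = 0 := by
  rw [b.repr_apply_apply]
  induction hx using Submodule.span_induction with
  | mem y hy =>
    obtain ⟨i, hi, rfl⟩ := hy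
    exact b.orthonormal.2 (by rintro rfl; exact hj hi)
  | zero => simp
  | add u v _ _ hu hv => rw [inner_add_right, hu, hv, add_zero]
  | smul a u _ hu => rw [inner_smul_right, hu, mul_zero]

lemma norm_sq_eq_sum (b : OrthonormalBasis (Fin q) ℂ (Eu q)) (x : Eu q) :
    ‖x‖ ^ 2 = ∑ j, ‖b.repr x j‖ ^ 2 := by
  have h := re_inner_eq_sum b LinearMap.id (fun _ => 1) (fun j => by simp) x
  rw [LinearMap.id_apply, inner_self_re] at h
  simpa using h

lemma norm_le_on_span (M : Matrix (Fin p) (Fin q) ℂ) (b : OrthonormalBasis (Fin q) ℂ (Eu q))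
    (μ : Fin q → ℝ) (hT : ∀ j, toEuclideanLin (Mᴴ * M) (b j) = ((μ j : ℝ) : ℂ) • b j)
    (s : Set (Fin q)) (c : ℝ) (hc : 0 ≤ c) (hμ : ∀ j ∈ s, μ j ≤ c ^ 2)
    {x : Eu q} (hx : x ∈ Submodule.span ℂ (b '' s)) :
    ‖toEuclideanLin M x‖ ≤ c * ‖x‖ := by
  have h1 : ‖toEuclideanLin M x‖ ^ 2 = Complex.re (inner ℂ x (toEuclideanLin (Mᴴ * M) x)) := by
    rw [quad_eq, inner_self_re]
  have key : ‖toEuclideanLin M x‖ ^ 2 ≤ (c * ‖x‖) ^ 2 := by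
    rw [h1, re_inner_eq_sum b _ μ hT x, mul_pow]
    calc ∑ j, μ j * ‖b.repr x j‖ ^ 2 ≤ ∑ j, c ^ 2 * ‖b.repr x j‖ ^ 2 := by
          refine Finset.sum_le_sum fun j _ => ?_
          by_cases hj : j ∈ s
          · exact mul_le_mul_of_nonneg_right (hμ j hj) (by positivity)
          · rw [repr_eq_zero_of_mem_span b s hx hj]; simp
      _ = c ^ 2 * ‖x‖ ^ 2 := by rw [← Finset.mul_sum, ← norm_sq_eq_sum]
  have := Real.sqrt_le_sqrt key
  rwa [Real.sqrt_sq (norm_nonneg _), Real.sqrt_sq (by positivity)] at this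

lemma norm_ge_on_span (M : Matrix (Fin p) (Fin q) ℂ) (b : OrthonormalBasis (Fin q) ℂ (Eu q))
    (μ : Fin q → ℝ) (hT : ∀ j, toEuclideanLin (Mᴴ * M) (b j) = ((μ j : ℝ) : ℂ) • b j)
    (s : Set (Fin q)) (c : ℝ) (hc : 0 ≤ c) (hμ : ∀ j ∈ s, c ^ 2 ≤ μ j)
    (_hμ0 : ∀ j, 0 ≤ μ j)
    {x : Eu q} (hx : x ∈ Submodule.span ℂ (b '' s)) :
    c * ‖x‖ ≤ ‖toEuclideanLin M x‖ := by
  have h1 : ‖toEuclideanLin M x‖ ^ 2 = Complex.re (inner ℂ x (toEuclideanLin (Mᴴ * M) x)) := by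
    rw [quad_eq, inner_self_re]
  have key : (c * ‖x‖) ^ 2 ≤ ‖toEuclideanLin M x‖ ^ 2 := by
    rw [h1, re_inner_eq_sum b _ μ hT x, mul_pow]
    calc c ^ 2 * ‖x‖ ^ 2 = ∑ j, c ^ 2 * ‖b.repr x j‖ ^ 2 := by
          rw [← Finset.mul_sum, ← norm_sq_eq_sum]
      _ ≤ ∑ j, μ j * ‖b.repr x j‖ ^ 2 := by
          refine Finset.sum_le_sum fun j _ => ?_
          by_cases hj : j ∈ s
          · exact mul_le_mul_of_nonneg_right (hμ j hj) (by positivity)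
          · rw [repr_eq_zero_of_mem_span b s hx hj]; simp
  have := Real.sqrt_le_sqrt key
  rwa [Real.sqrt_sq (norm_nonneg _), Real.sqrt_sq (by positivity)] at this

lemma finrank_span_image (b : OrthonormalBasis (Fin q) ℂ (Eu q)) (s : Finset (Fin q)) :
    Module.finrank ℂ (Submodule.span ℂ (b '' ↑s)) = s.card := by
  have hli : LinearIndependent ℂ (fun i : s => b i) :=
    b.orthonormal.linearIndependent.comp _ Subtype.val_injective
  have himg : Set.range (fun i : s => b i) = b '' ↑s := by
    ext y; simp [Set.mem_image]
  rw [← himg, finrank_span_eq_card hli, Fintype.card_coe]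


lemma sv_nonneg (M : Matrix (Fin p) (Fin q) ℂ) (i : ℕ) : 0 ≤ sv M i := by
  unfold sv; split
  · exact Real.sqrt_nonneg _
  · exact le_refl 0

lemma eigen_apply (M : Matrix (Fin p) (Fin q) ℂ) (σ : Equiv.Perm (Fin q)) (j : Fin q) :
    toEuclideanLin (Mᴴ * M)
        (((posSemidef_conjTranspose_mul_self M).1.eigenvectorBasis.reindex σ.symm) j)
      = (((posSemidef_conjTranspose_mul_self M).1.eigenvalues (σ j) : ℝ) : ℂ)
        • ((posSemidef_conjTranspose_mul_self M).1.eigenvectorBasis.reindex σ.symm) j := by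
  set hN := (posSemidef_conjTranspose_mul_self M).1
  have h := hN.mulVec_eigenvectorBasis (σ j)
  rw [OrthonormalBasis.reindex_apply, Equiv.symm_symm]
  apply PiLp.ext
  intro i
  have hL : (toEuclideanLin (Mᴴ * M) (hN.eigenvectorBasis (σ j))) i
      = ((Mᴴ * M) *ᵥ ⇑(hN.eigenvectorBasis (σ j))) i := rfl
  rw [hL, h]
  simp [Complex.real_smul]

lemma sv_eq (M : Matrix (Fin p) (Fin q) ℂ) {i : ℕ} (h1 : 1 ≤ i) (h2 : i ≤ q) :
    sv M i = Real.sqrt ((posSemidef_conjTranspose_mul_self M).1.eigenvalues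
      (Tuple.sort (posSemidef_conjTranspose_mul_self M).1.eigenvalues ⟨q - i, by omega⟩)) := by
  rw [sv, dif_pos ⟨h1, h2⟩]

lemma exists_low (M : Matrix (Fin p) (Fin q) ℂ) (r : ℕ) :
    ∃ W : Submodule ℂ (Eu q), q ≤ Module.finrank ℂ W + r ∧
      ∀ x ∈ W, ‖toEuclideanLin M x‖ ≤ sv M (r + 1) * ‖x‖ := by
  by_cases hr : q ≤ r
  · refine ⟨⊥, by simpa using hr, fun x hx => ?_⟩
    rw [Submodule.mem_bot] at hx
    subst hx
    simp
  · push_neg at hr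
    set hN := (posSemidef_conjTranspose_mul_self M).1 with hhN
    set σ := Tuple.sort hN.eigenvalues with hσ
    set b := hN.eigenvectorBasis.reindex σ.symm with hb
    have hcast : q - r ≤ q := Nat.sub_le _ _
    set s : Finset (Fin q) := Finset.image (Fin.castLE hcast) Finset.univ with hs
    refine ⟨Submodule.span ℂ (b '' ↑s), ?_, ?_⟩
    · rw [finrank_span_image, Finset.card_image_of_injective _ (Fin.castLE_injective _),
        Finset.card_univ, Fintype.card_fin]
      omega
    · intro x hx
      have hsv : sv M (r + 1) = Real.sqrt (hN.eigenvalues (σ ⟨q - (r + 1), by omega⟩)) :=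
        sv_eq M (by omega) (by omega)
      refine norm_le_on_span M b (fun j => hN.eigenvalues (σ j)) (fun j => eigen_apply M σ j)
        ↑s (sv M (r + 1)) (sv_nonneg M _) ?_ hx
      intro j hj
      rw [hsv, Real.sq_sqrt ((posSemidef_conjTranspose_mul_self M).eigenvalues_nonneg _)]
      have hmono := Tuple.monotone_sort hN.eigenvalues
      have hjle : j ≤ (⟨q - (r + 1), by omega⟩ : Fin q) := by
        simp only [hs, Finset.coe_image, Set.mem_image, Finset.coe_univ, Set.mem_univ,
          true_and] at hj
        obtain ⟨i, _, rfl⟩ := hj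
        rw [Fin.le_def]
        have := i.isLt
        simp only [Fin.coe_castLE]
        omega
      exact hmono hjle


lemma exists_high (M : Matrix (Fin p) (Fin q) ℂ) (m : ℕ) (h1 : 1 ≤ m) (hm : m ≤ q) :
    ∃ V : Submodule ℂ (Eu q), Module.finrank ℂ V = m ∧
      ∀ x ∈ V, sv M m * ‖x‖ ≤ ‖toEuclideanLin M x‖ := by
  set hN := (posSemidef_conjTranspose_mul_self M).1 with hhN
  set σ := Tuple.sort hN.eigenvalues with hσ
  set b := hN.eigenvectorBasis.reindex σ.symm with hb
  have hinj : Function.Injective (fun i : Fin m => (⟨q - m + i, by omega⟩ : Fin q)) := by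
    intro i j hij
    simp only [Fin.mk.injEq] at hij
    exact Fin.ext (by omega)
  set s : Finset (Fin q) := Finset.image (fun i : Fin m => (⟨q - m + i, by omega⟩ : Fin q))
    Finset.univ with hs
  refine ⟨Submodule.span ℂ (b '' ↑s), ?_, ?_⟩
  · rw [finrank_span_image, Finset.card_image_of_injective _ hinj,
      Finset.card_univ, Fintype.card_fin]
  · intro x hx
    have hsv : sv M m = Real.sqrt (hN.eigenvalues (σ ⟨q - m, by omega⟩)) :=
      sv_eq M h1 hm
    refine norm_ge_on_span M b (fun j => hN.eigenvalues (σ j)) (fun j => eigen_apply M σ j)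
      ↑s (sv M m) (sv_nonneg M _) ?_
      (fun j => (posSemidef_conjTranspose_mul_self M).eigenvalues_nonneg _) hx
    intro j hj
    rw [hsv, Real.sq_sqrt ((posSemidef_conjTranspose_mul_self M).eigenvalues_nonneg _)]
    have hmono := Tuple.monotone_sort hN.eigenvalues
    have hjle : (⟨q - m, by omega⟩ : Fin q) ≤ j := by
      simp only [hs, Finset.coe_image, Set.mem_image, Finset.coe_univ, Set.mem_univ,
        true_and] at hj
      obtain ⟨i, _, rfl⟩ := hj
      rw [Fin.le_def]
      simp only []
      omega
    exact hmono hjle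

lemma exists_inf {K : ℕ} (A : Fin K → Matrix (Fin p) (Fin q) ℂ) (r : ℕ) (t : Finset (Fin K)) :
    ∃ W : Submodule ℂ (Eu q), q ≤ Module.finrank ℂ W + t.card * r ∧
      ∀ x ∈ W, ‖toEuclideanLin (∑ k ∈ t, A k) x‖ ≤ (∑ k ∈ t, sv (A k) (r + 1)) * ‖x‖ := by
  classical
  induction t using Finset.induction with
  | empty =>
    refine ⟨⊤, ?_, ?_⟩
    · simp [finrank_euclideanSpace]
    · intro x _
      simp
  | @insert a t ha ih =>
    obtain ⟨W, hW1, hW2⟩ := ih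
    obtain ⟨Wa, ha1, ha2⟩ := exists_low (A a) r
    refine ⟨Wa ⊓ W, ?_, ?_⟩
    · have hsum := Submodule.finrank_sup_add_finrank_inf_eq Wa W
      have h2 : Module.finrank ℂ ↥(Wa ⊔ W) ≤ q := by
        simpa [finrank_euclideanSpace] using Submodule.finrank_le (Wa ⊔ W)
      rw [Finset.card_insert_of_notMem ha, add_mul, one_mul]
      generalize hgen : t.card * r = c at hW1 ⊢
      omega
    · intro x hx
      rw [Submodule.mem_inf] at hx
      rw [Finset.sum_insert ha, Finset.sum_insert ha, map_add, LinearMap.add_apply, add_mul]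
      exact (norm_add_le _ _).trans (add_le_add (ha2 x hx.1) (hW2 x hx.2))


end SVAux

open SVAux in
/-- Iterated Ky Fan singular value inequality for a sum of `K` matrices. -/
theorem sv_sum_le {p q K : ℕ} (A : Fin K → Matrix (Fin p) (Fin q) ℂ) (r : ℕ) :
    sv (∑ k, A k) (K * r + 1) ≤ ∑ k, sv (A k) (r + 1) := by
  classical
  by_cases hq : 1 ≤ K * r + 1 ∧ K * r + 1 ≤ q
  · obtain ⟨V, hV1, hV2⟩ := exists_high (∑ k, A k) (K * r + 1) hq.1 hq.2
    obtain ⟨W, hW1, hW2⟩ := exists_inf A r Finset.univ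
    rw [Finset.card_univ, Fintype.card_fin] at hW1
    have hx : ∃ x : Eu q, x ∈ V ⊓ W ∧ x ≠ 0 := by
      have hsum := Submodule.finrank_sup_add_finrank_inf_eq V W
      have h2 : Module.finrank ℂ ↥(V ⊔ W) ≤ q := by
        simpa [finrank_euclideanSpace] using Submodule.finrank_le (V ⊔ W)
      have hpos : 0 < Module.finrank ℂ ↥(V ⊓ W) := by
        generalize hgen : K * r = c at hV1 hW1 ⊢
        omega
      by_contra hcon
      push_neg at hcon
      have hbot : V ⊓ W = ⊥ := (Submodule.eq_bot_iff _).mpr hcon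
      rw [hbot, finrank_bot] at hpos
      exact lt_irrefl 0 hpos
    obtain ⟨x, hxm, hx0⟩ := hx
    rw [Submodule.mem_inf] at hxm
    have h1 : sv (∑ k, A k) (K * r + 1) * ‖x‖ ≤ ‖toEuclideanLin (∑ k, A k) x‖ :=
      hV2 x hxm.1
    have h2 := hW2 x hxm.2
    have hn : (0:ℝ) < ‖x‖ := norm_pos_iff.mpr hx0
    exact le_of_mul_le_mul_right (h1.trans h2) hn
  · rw [sv, dif_neg hq]
    exact Finset.sum_nonneg fun k _ => sv_nonneg _ _
end

section
/- For N×N Hermitian matrices A and B, the supremum norm of the difference of their empirical spectral distribution functions satisfies ‖F^A − F^B‖ ≤ (1/N) rank(A − B). -/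
open Matrix Finset Module

variable {N : ℕ}

lemma toEuclideanLin_eigen {M : Matrix (Fin N) (Fin N) ℂ} (hM : M.IsHermitian) (j : Fin N) :
    Matrix.toEuclideanLin M (hM.eigenvectorBasis j) = (hM.eigenvalues j : ℂ) • hM.eigenvectorBasis j := by
  apply (WithLp.equiv 2 _).injective
  simp [Matrix.toEuclideanLin_apply, hM.mulVec_eigenvectorBasis]

lemma inner_toEuclideanLin {M : Matrix (Fin N) (Fin N) ℂ} (hM : M.IsHermitian)
    (v : EuclideanSpace ℂ (Fin N)) :
    inner ℂ v (Matrix.toEuclideanLin M v) =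
      ∑ j, (hM.eigenvalues j : ℂ) * (hM.eigenvectorBasis.repr v j
        * (starRingEnd ℂ) (hM.eigenvectorBasis.repr v j)) := by
  set e := hM.eigenvectorBasis
  conv_lhs => rw [show Matrix.toEuclideanLin M v
    = ∑ j, (e.repr v j * hM.eigenvalues j) • e j by
      conv_lhs => rw [← e.sum_repr v]
      rw [map_sum]
      refine Finset.sum_congr rfl fun j _ => ?_
      rw [_root_.map_smul, toEuclideanLin_eigen hM j, smul_smul, mul_comm]]
  rw [inner_sum]
  refine Finset.sum_congr rfl fun j _ => ?_
  rw [inner_smul_right]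
  rw [← inner_conj_symm, ← e.repr_apply_apply]
  ring

lemma re_inner_toEuclideanLin {M : Matrix (Fin N) (Fin N) ℂ} (hM : M.IsHermitian)
    (v : EuclideanSpace ℂ (Fin N)) :
    (inner ℂ v (Matrix.toEuclideanLin M v) : ℂ).re =
      ∑ j, hM.eigenvalues j * ‖hM.eigenvectorBasis.repr v j‖ ^ 2 := by
  rw [inner_toEuclideanLin hM v]
  rw [Complex.re_sum]
  refine Finset.sum_congr rfl fun j _ => ?_
  rw [Complex.mul_conj']
  rw [← Complex.ofReal_pow, ← Complex.ofReal_mul, Complex.ofReal_re]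


lemma sum_norm_sq_repr (e : OrthonormalBasis (Fin N) ℂ (EuclideanSpace ℂ (Fin N)))
    (v : EuclideanSpace ℂ (Fin N)) : ∑ j, ‖e.repr v j‖ ^ 2 = ‖v‖ ^ 2 := by
  rw [← e.repr.norm_map v, EuclideanSpace.norm_eq, Real.sq_sqrt (by positivity)]

lemma esd_count_le (A B : Matrix (Fin N) (Fin N) ℂ)
    (hA : A.IsHermitian) (hB : B.IsHermitian) (x : ℝ) :
    (univ.filter fun i => hB.eigenvalues i ≤ x).card ≤
      (univ.filter fun i => hA.eigenvalues i ≤ x).card + (A - B).rank := by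
  classical
  set eA := hA.eigenvectorBasis
  set eB := hB.eigenvectorBasis
  set W : Submodule ℂ (EuclideanSpace ℂ (Fin N)) :=
    Submodule.span ℂ (eB '' {i | hB.eigenvalues i ≤ x}) with hWdef
  set U : Submodule ℂ (EuclideanSpace ℂ (Fin N)) :=
    Submodule.span ℂ (eA '' {i | x < hA.eigenvalues i}) with hUdef
  set K : Submodule ℂ (EuclideanSpace ℂ (Fin N)) :=
    LinearMap.ker (Matrix.toEuclideanLin (A - B)) with hKdef
  -- dimension of a span of orthonormal basis vectors
  have dim_span : ∀ (e : OrthonormalBasis (Fin N) ℂ (EuclideanSpace ℂ (Fin N)))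
      (p : Fin N → Prop) [DecidablePred p],
      finrank ℂ (Submodule.span ℂ (e '' {i | p i})) = (univ.filter p).card := by
    intro e p _
    have h1 : (⇑e '' {i | p i}) = Set.range (⇑e ∘ (Subtype.val : {i // p i} → Fin N)) := by
      rw [Set.image_eq_range]
      rfl
    rw [h1, finrank_span_eq_card ((e.orthonormal.linearIndependent).comp
      Subtype.val Subtype.val_injective), Fintype.card_subtype]
  have hW : finrank ℂ W = (univ.filter fun i => hB.eigenvalues i ≤ x).card :=
    dim_span eB _
  have hU : finrank ℂ U = (univ.filter fun i => x < hA.eigenvalues i).card :=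
    dim_span eA _
  have hK : finrank ℂ K + (A - B).rank = N := by
    have := LinearMap.finrank_range_add_finrank_ker (Matrix.toEuclideanLin (A - B))
    rw [Matrix.toEuclideanLin_eq_toLin, ← Matrix.rank_eq_finrank_range_toLin (A - B)
      (PiLp.basisFun 2 ℂ (Fin N)) (PiLp.basisFun 2 ℂ (Fin N)),
      finrank_euclideanSpace, Fintype.card_fin] at this
    rw [hKdef, Matrix.toEuclideanLin_eq_toLin]
    omega
  -- support of repr for elements of span of basis vectors
  have hsupp : ∀ (e : OrthonormalBasis (Fin N) ℂ (EuclideanSpace ℂ (Fin N)))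
      (s : Set (Fin N)) (v : EuclideanSpace ℂ (Fin N)),
      v ∈ Submodule.span ℂ (⇑e '' s) → ∀ i ∉ s, e.repr v i = 0 := by
    intro e s v hv i hi
    have h := (Basis.mem_span_image (b := e.toBasis)).1 (by rwa [e.coe_toBasis])
    have h2 : e.toBasis.repr v i = 0 := by
      by_contra h0
      exact hi (h (Finsupp.mem_support_iff.2 h0))
    rwa [e.coe_toBasis_repr_apply] at h2
  have hdisj : Disjoint (W ⊓ K) U := by
    rw [Submodule.disjoint_def]
    intro v hvWK hvU
    obtain ⟨hvW, hvK⟩ := hvWK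
    by_contra hv0
    have hBv : ∀ i, ¬ hB.eigenvalues i ≤ x → eB.repr v i = 0 := fun i hi =>
      hsupp eB _ v hvW i hi
    have hAv : ∀ i, ¬ x < hA.eigenvalues i → eA.repr v i = 0 := fun i hi =>
      hsupp eA _ v hvU i hi
    have hABv : Matrix.toEuclideanLin A v = Matrix.toEuclideanLin B v := by
      have h2 : Matrix.toEuclideanLin (A - B) v
          = Matrix.toEuclideanLin A v - Matrix.toEuclideanLin B v := by
        rw [map_sub]; rfl
      have h3 : Matrix.toEuclideanLin (A - B) v = 0 := hvK
      rw [h3] at h2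
      exact (sub_eq_zero.1 h2.symm)
    have hup : (inner ℂ v (Matrix.toEuclideanLin B v) : ℂ).re ≤ x * ‖v‖ ^ 2 := by
      rw [re_inner_toEuclideanLin hB v, ← sum_norm_sq_repr eB v, Finset.mul_sum]
      apply Finset.sum_le_sum
      intro j _
      by_cases hj : hB.eigenvalues j ≤ x
      · nlinarith [sq_nonneg ‖eB.repr v j‖]
      · rw [hBv j hj]; simp
    have hlow : x * ‖v‖ ^ 2 < (inner ℂ v (Matrix.toEuclideanLin A v) : ℂ).re := by
      rw [re_inner_toEuclideanLin hA v, ← sum_norm_sq_repr eA v, Finset.mul_sum]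
      obtain ⟨j0, hj0⟩ : ∃ j, eA.repr v j ≠ 0 := by
        by_contra h
        push_neg at h
        apply hv0
        have h4 : eA.repr v = 0 := by
          ext j; exact h j
        simpa using eA.repr.map_eq_zero_iff.1 h4
      apply Finset.sum_lt_sum
      · intro j _
        by_cases hj : x < hA.eigenvalues j
        · nlinarith [sq_nonneg ‖eA.repr v j‖]
        · rw [hAv j hj]; simp
      · refine ⟨j0, Finset.mem_univ _, ?_⟩
        have hj : x < hA.eigenvalues j0 := by
          by_contra h
          exact hj0 (hAv j0 h)
        have h5 : 0 < ‖eA.repr v j0‖ ^ 2 := by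
          have := norm_pos_iff.mpr hj0
          positivity
        nlinarith
    rw [hABv] at hlow
    linarith
  have hd := Submodule.finrank_add_finrank_le_of_disjoint hdisj
  rw [finrank_euclideanSpace, Fintype.card_fin] at hd
  have hsupinf := Submodule.finrank_sup_add_finrank_inf_eq W K
  have hle := Submodule.finrank_le (W ⊔ K)
  rw [finrank_euclideanSpace, Fintype.card_fin] at hle
  have hcards : (univ.filter fun i => hA.eigenvalues i ≤ x).card
      + (univ.filter fun i => x < hA.eigenvalues i).card = N := by
    have := Finset.card_filter_add_card_filter_not
      (s := (univ : Finset (Fin N))) (p := fun i => hA.eigenvalues i ≤ x)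
    simp only [not_le, Finset.card_univ, Fintype.card_fin] at this
    exact this
  have hWK : finrank ℂ (W ⊓ K : Submodule ℂ (EuclideanSpace ℂ (Fin N))) ≥
      finrank ℂ W + finrank ℂ K - N := by omega
  omega


open Matrix

/-- The empirical spectral distribution function of a Hermitian `N × N` matrix:
`F^M(x)` is the fraction of eigenvalues that are `≤ x`. -/
noncomputable def esd {N : ℕ} {M : Matrix (Fin N) (Fin N) ℂ} (hM : M.IsHermitian)
    (x : ℝ) : ℝ :=
  ((Finset.univ.filter fun i => hM.eigenvalues i ≤ x).card : ℝ) / N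

/-- The rank inequality for empirical spectral distributions (Lemma 2.4 of Silverstein
and Bai): `‖F^A − F^B‖ ≤ rank(A − B) / N`. -/
theorem esd_diff_le_rank {N : ℕ} (A B : Matrix (Fin N) (Fin N) ℂ)
    (hA : A.IsHermitian) (hB : B.IsHermitian) (x : ℝ) :
    |esd hA x - esd hB x| ≤ ((A - B).rank : ℝ) / N := by
  rcases Nat.eq_zero_or_pos N with hN | hN
  · subst hN
    simp [esd]
  have h1 := esd_count_le A B hA hB x
  have h2 := esd_count_le B A hB hA x
  have hrn : (B - A).rank = (A - B).rank := by
    rw [show B - A = -(A - B) from (neg_sub A B).symm]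
    unfold Matrix.rank
    rw [show (-(A - B)).mulVecLin = -(A - B).mulVecLin by
      ext v i
      simp [Matrix.mulVecLin_apply, Matrix.neg_mulVec], LinearMap.range_neg]
  rw [hrn] at h2
  rw [abs_sub_le_iff]
  have hNpos : (0:ℝ) < N := by exact_mod_cast hN
  unfold esd
  have h1' : ((univ.filter fun i => hB.eigenvalues i ≤ x).card : ℝ)
      ≤ ((univ.filter fun i => hA.eigenvalues i ≤ x).card : ℝ) + ((A - B).rank : ℝ) := by
    exact_mod_cast h1
  have h2' : ((univ.filter fun i => hA.eigenvalues i ≤ x).card : ℝ)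
      ≤ ((univ.filter fun i => hB.eigenvalues i ≤ x).card : ℝ) + ((A - B).rank : ℝ) := by
    exact_mod_cast h2
  constructor <;>
  · rw [div_sub_div_same, div_le_div_iff₀ hNpos hNpos]
    nlinarith [h1', h2', hNpos]
end

section
/- Let S, A, Ā be Hermitian N×N matrices, Q an N×n matrix, and B Hermitian n×n. Then ‖F^{S + A Q B Q* A} − F^{S + Ā Q B Q* Ā}‖ ≤ (2/N) rank(A − Ā). -/
open Matrix

open Finset Module Submodule

variable {N : ℕ} {M : Matrix (Fin N) (Fin N) ℂ}

/-- eigenvector basis as a basis of plain `Fin N → ℂ`. -/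
noncomputable def wb (hM : M.IsHermitian) : Basis (Fin N) ℂ (Fin N → ℂ) :=
  hM.eigenvectorBasis.toBasis.map (WithLp.linearEquiv 2 ℂ (Fin N → ℂ))

lemma exists_c (hM : M.IsHermitian) (s : Finset (Fin N)) (v : Fin N → ℂ)
    (hv : v ∈ Submodule.span ℂ (wb hM '' ↑s)) :
    ∃ c : Fin N → ℂ, (∀ i, i ∉ s → c i = 0) ∧
      v = (hM.eigenvectorUnitary : Matrix (Fin N) (Fin N) ℂ) *ᵥ c := by
  classical
  refine ⟨fun i => (wb hM).repr v i, fun i hi => ?_, ?_⟩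
  · have := (Basis.mem_span_image (b := wb hM)).1 hv
    by_contra hne
    exact hi (this (Finsupp.mem_support_iff.2 hne))
  · have hsum := (wb hM).sum_repr v
    funext k
    conv_lhs => rw [← hsum]
    simp only [mulVec, dotProduct, Finset.sum_apply, Pi.smul_apply, smul_eq_mul]
    refine Finset.sum_congr rfl fun i _ => ?_
    have h : (wb hM) i k = (hM.eigenvectorUnitary : Matrix (Fin N) (Fin N) ℂ) k i := rfl
    rw [h]; ring

lemma quad_eq (hM : M.IsHermitian) (c : Fin N → ℂ) :
    star ((hM.eigenvectorUnitary : Matrix (Fin N) (Fin N) ℂ) *ᵥ c) ⬝ᵥ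
      (M *ᵥ ((hM.eigenvectorUnitary : Matrix (Fin N) (Fin N) ℂ) *ᵥ c)) =
    ∑ i, (hM.eigenvalues i : ℂ) * ((starRingEnd ℂ) (c i) * c i) := by
  set U := (hM.eigenvectorUnitary : Matrix (Fin N) (Fin N) ℂ)
  have key : star U * M * U = diagonal (RCLike.ofReal ∘ hM.eigenvalues) :=
    by have := hM.conjStarAlgAut_star_eigenvectorUnitary; simpa [Unitary.conjStarAlgAut_apply] using this
  calc star (U *ᵥ c) ⬝ᵥ (M *ᵥ (U *ᵥ c)) = star c ⬝ᵥ ((star U * M * U) *ᵥ c) := by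
        rw [star_mulVec, ← dotProduct_mulVec, mulVec_mulVec, ← star_eq_conjTranspose,
          mulVec_mulVec, Matrix.mul_assoc]
      _ = _ := by
        rw [key]
        simp [dotProduct, mulVec, diagonal, Finset.mul_sum, mul_comm, mul_assoc, mul_left_comm]

lemma norm_eq (hM : M.IsHermitian) (c : Fin N → ℂ) :
    star ((hM.eigenvectorUnitary : Matrix (Fin N) (Fin N) ℂ) *ᵥ c) ⬝ᵥ
      ((hM.eigenvectorUnitary : Matrix (Fin N) (Fin N) ℂ) *ᵥ c) =
    ∑ i, (starRingEnd ℂ) (c i) * c i := by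
  set U := (hM.eigenvectorUnitary : Matrix (Fin N) (Fin N) ℂ)
  have key : star U * U = 1 := Unitary.coe_star_mul_self hM.eigenvectorUnitary
  calc star (U *ᵥ c) ⬝ᵥ (U *ᵥ c) = star c ⬝ᵥ ((star U * U) *ᵥ c) := by
        rw [star_mulVec, ← dotProduct_mulVec, mulVec_mulVec, ← star_eq_conjTranspose]
      _ = _ := by rw [key]; simp [dotProduct]

lemma quad_re (hM : M.IsHermitian) (c : Fin N → ℂ) :
    (star ((hM.eigenvectorUnitary : Matrix (Fin N) (Fin N) ℂ) *ᵥ c) ⬝ᵥ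
      (M *ᵥ ((hM.eigenvectorUnitary : Matrix (Fin N) (Fin N) ℂ) *ᵥ c))).re =
    ∑ i, hM.eigenvalues i * Complex.normSq (c i) := by
  rw [quad_eq hM c]
  rw [Complex.re_sum]
  refine Finset.sum_congr rfl fun i _ => ?_
  rw [mul_comm ((starRingEnd ℂ) (c i)) (c i), Complex.mul_conj, ← Complex.ofReal_mul,
    Complex.ofReal_re]

lemma norm_re (hM : M.IsHermitian) (c : Fin N → ℂ) :
    (star ((hM.eigenvectorUnitary : Matrix (Fin N) (Fin N) ℂ) *ᵥ c) ⬝ᵥ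
      ((hM.eigenvectorUnitary : Matrix (Fin N) (Fin N) ℂ) *ᵥ c)).re =
    ∑ i, Complex.normSq (c i) := by
  rw [norm_eq hM c, Complex.re_sum]
  refine Finset.sum_congr rfl fun i _ => ?_
  rw [mul_comm, Complex.mul_conj]; exact Complex.ofReal_re _

lemma quad_le (hM : M.IsHermitian) {x : ℝ} (s : Finset (Fin N))
    (hs : ∀ i ∈ s, hM.eigenvalues i ≤ x) {v : Fin N → ℂ}
    (hv : v ∈ Submodule.span ℂ (wb hM '' ↑s)) :
    (star v ⬝ᵥ (M *ᵥ v)).re ≤ x * (star v ⬝ᵥ v).re := by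
  obtain ⟨c, hc, rfl⟩ := exists_c hM s v hv
  rw [quad_re, norm_re, Finset.mul_sum]
  refine Finset.sum_le_sum fun i _ => ?_
  by_cases h : c i = 0
  · simp [h]
  · have hi : i ∈ s := by by_contra hi; exact h (hc i hi)
    exact mul_le_mul_of_nonneg_right (hs i hi) (Complex.normSq_nonneg _)

lemma quad_gt (hM : M.IsHermitian) {x : ℝ} (s : Finset (Fin N))
    (hs : ∀ i ∈ s, x < hM.eigenvalues i) {v : Fin N → ℂ}
    (hv : v ∈ Submodule.span ℂ (wb hM '' ↑s)) (hv0 : v ≠ 0) :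
    x * (star v ⬝ᵥ v).re < (star v ⬝ᵥ (M *ᵥ v)).re := by
  obtain ⟨c, hc, rfl⟩ := exists_c hM s v hv
  have hc0 : c ≠ 0 := by rintro rfl; simp at hv0
  obtain ⟨j, hj⟩ := Function.ne_iff.1 hc0
  have hjs : j ∈ s := by by_contra hjs; exact hj (hc j hjs)
  rw [quad_re, norm_re, Finset.mul_sum]
  refine Finset.sum_lt_sum (fun i _ => ?_) ⟨j, Finset.mem_univ j, ?_⟩
  · by_cases h : c i = 0
    · simp [h]
    · have hi : i ∈ s := by by_contra hi; exact h (hc i hi)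
      exact mul_le_mul_of_nonneg_right (hs i hi).le (Complex.normSq_nonneg _)
  · exact mul_lt_mul_of_pos_right (hs j hjs) (Complex.normSq_pos.2 hj)

lemma finrank_span_wb (hM : M.IsHermitian) (s : Finset (Fin N)) :
    finrank ℂ (Submodule.span ℂ (wb hM '' ↑s)) = s.card := by
  classical
  have hli : LinearIndependent ℂ (fun i : {x // x ∈ s} => wb hM i) :=
    (wb hM).linearIndependent.comp Subtype.val Subtype.val_injective
  have hr : Set.range (fun i : {x // x ∈ s} => wb hM i) = wb hM '' ↑s := by
    ext y; simp
  rw [← hr, finrank_span_eq_card hli, Fintype.card_coe]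

lemma my_rank_add_le (X Y : Matrix (Fin N) (Fin N) ℂ) :
    (X + Y).rank ≤ X.rank + Y.rank := by
  have hle : LinearMap.range (X + Y).mulVecLin ≤
      LinearMap.range X.mulVecLin ⊔ LinearMap.range Y.mulVecLin := by
    rintro z ⟨v, rfl⟩
    exact Submodule.mem_sup.2 ⟨X *ᵥ v, ⟨v, rfl⟩, Y *ᵥ v, ⟨v, rfl⟩, by
      simp [Matrix.add_mulVec, Matrix.mulVecLin_apply]⟩
  calc (X + Y).rank ≤ finrank ℂ ↥(LinearMap.range X.mulVecLin ⊔ LinearMap.range Y.mulVecLin) :=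
        Submodule.finrank_mono hle
    _ ≤ X.rank + Y.rank := by
        rw [Matrix.rank, Matrix.rank, ← Submodule.finrank_sup_add_finrank_inf_eq]
        exact Nat.le_add_right _ _

lemma my_rank_neg (X : Matrix (Fin N) (Fin N) ℂ) : (-X).rank = X.rank := by
  have h : (-X).mulVecLin = -X.mulVecLin := by
    ext v; simp [Matrix.mulVecLin_apply, Matrix.neg_mulVec]
  rw [Matrix.rank, Matrix.rank, h, LinearMap.range_neg]

lemma finrank_ker_eq (X : Matrix (Fin N) (Fin N) ℂ) :
    finrank ℂ (LinearMap.ker X.mulVecLin) = N - X.rank := by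
  have h := LinearMap.finrank_range_add_finrank_ker X.mulVecLin
  rw [Module.finrank_fintype_fun_eq_card, Fintype.card_fin] at h
  rw [← Matrix.rank] at h
  omega

lemma inf_dim (p q : Submodule ℂ (Fin N → ℂ)) :
    finrank ℂ p + finrank ℂ q ≤ N + finrank ℂ ↥(p ⊓ q) := by
  have h := Submodule.finrank_sup_add_finrank_inf_eq p q
  have h2 : finrank ℂ ↥(p ⊔ q) ≤ N := by
    have := Submodule.finrank_le (p ⊔ q)
    rwa [Module.finrank_fintype_fun_eq_card, Fintype.card_fin] at this
  omega

lemma count_le (M1 M2 : Matrix (Fin N) (Fin N) ℂ) (h1 : M1.IsHermitian)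
    (h2 : M2.IsHermitian) (x : ℝ) :
    (Finset.univ.filter fun i => h1.eigenvalues i ≤ x).card ≤
      (Finset.univ.filter fun i => h2.eigenvalues i ≤ x).card + (M1 - M2).rank := by
  classical
  by_contra hcon
  push_neg at hcon
  set s1 := Finset.univ.filter fun i => h1.eigenvalues i ≤ x with hs1
  set s2 := Finset.univ.filter fun i => h2.eigenvalues i ≤ x with hs2
  set r := (M1 - M2).rank with hr
  set V1 := Submodule.span ℂ (wb h1 '' ↑s1) with hV1
  set W2 := Submodule.span ℂ (wb h2 '' ↑s2ᶜ) with hW2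
  set K := LinearMap.ker (M1 - M2).mulVecLin with hK
  have dV1 : finrank ℂ V1 = s1.card := finrank_span_wb h1 s1
  have dW2 : finrank ℂ W2 = N - s2.card := by
    rw [hW2, finrank_span_wb h2 s2ᶜ, Finset.card_compl, Fintype.card_fin]
  have dK : finrank ℂ K = N - r := finrank_ker_eq (M1 - M2)
  have hs2N : s2.card ≤ N := by
    have := Finset.card_le_card (Finset.subset_univ s2); simpa using this
  have hrN : r ≤ N := by
    have := Matrix.rank_le_card_width (M1 - M2); simpa using this
  have ineq1 := inf_dim W2 K
  have ineq2 := inf_dim V1 (W2 ⊓ K)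
  have dpos : 0 < finrank ℂ ↥(V1 ⊓ (W2 ⊓ K)) := by omega
  obtain ⟨v, hvmem⟩ := Module.finrank_pos_iff_exists_ne_zero.1 dpos
  obtain ⟨hv1, hv2, hvK⟩ : v.1 ∈ V1 ∧ v.1 ∈ W2 ∧ v.1 ∈ K := by
    have := v.2; simp only [Submodule.mem_inf] at this; exact ⟨this.1, this.2.1, this.2.2⟩
  have hv0 : (v : Fin N → ℂ) ≠ 0 := fun h => hvmem (Subtype.ext h)
  have hq1 : (star (v : Fin N → ℂ) ⬝ᵥ (M1 *ᵥ v)).re ≤ x * (star (v : Fin N → ℂ) ⬝ᵥ v).re :=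
    quad_le h1 s1 (fun i hi => (Finset.mem_filter.1 hi).2) hv1
  have hq2 : x * (star (v : Fin N → ℂ) ⬝ᵥ v).re < (star (v : Fin N → ℂ) ⬝ᵥ (M2 *ᵥ v)).re :=
    quad_gt h2 s2ᶜ (fun i hi => by
      have := Finset.mem_compl.1 hi
      simp only [hs2, Finset.mem_filter, Finset.mem_univ, true_and, not_le] at this
      exact this) hv2 hv0
  have heq : M1 *ᵥ (v : Fin N → ℂ) = M2 *ᵥ v := by
    have := LinearMap.mem_ker.1 hvK
    rw [Matrix.mulVecLin_apply, Matrix.sub_mulVec, sub_eq_zero] at this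
    exact this
  rw [heq] at hq1
  linarith

set_option maxHeartbeats 2000000 in
theorem esd_diff_le_two_rank {N n : ℕ} (S A A' : Matrix (Fin N) (Fin N) ℂ)
    (Q : Matrix (Fin N) (Fin n) ℂ) (B : Matrix (Fin n) (Fin n) ℂ)
    (hS : S.IsHermitian) (hA : A.IsHermitian) (hA' : A'.IsHermitian) (hB : B.IsHermitian)
    (h1 : (S + A * Q * B * Qᴴ * A).IsHermitian)
    (h2 : (S + A' * Q * B * Qᴴ * A').IsHermitian) (x : ℝ) :
    |esd h1 x - esd h2 x| ≤ 2 * ((A - A').rank : ℝ) / N := by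
  have hdecomp : (S + A * Q * B * Qᴴ * A) - (S + A' * Q * B * Qᴴ * A') =
      (A - A') * (Q * B * Qᴴ * A) + A' * Q * B * Qᴴ * (A - A') := by
    simp only [Matrix.sub_mul, Matrix.mul_sub, Matrix.mul_assoc]
    abel
  have hrank : ((S + A * Q * B * Qᴴ * A) - (S + A' * Q * B * Qᴴ * A')).rank ≤
      2 * (A - A').rank := by
    rw [hdecomp]
    calc ((A - A') * (Q * B * Qᴴ * A) + A' * Q * B * Qᴴ * (A - A')).rank ≤
          ((A - A') * (Q * B * Qᴴ * A)).rank + (A' * Q * B * Qᴴ * (A - A')).rank :=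
        my_rank_add_le _ _
      _ ≤ (A - A').rank + (A - A').rank :=
          Nat.add_le_add (Matrix.rank_mul_le_left _ _) (Matrix.rank_mul_le_right _ _)
      _ = 2 * (A - A').rank := by ring
  have hc1 := count_le _ _ h1 h2 x
  have hc2 := count_le _ _ h2 h1 x
  have hneg : ((S + A' * Q * B * Qᴴ * A') - (S + A * Q * B * Qᴴ * A)).rank =
      ((S + A * Q * B * Qᴴ * A) - (S + A' * Q * B * Qᴴ * A')).rank := by
    rw [← neg_sub (S + A * Q * B * Qᴴ * A), my_rank_neg]
  rw [hneg] at hc2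
  have habs : |((Finset.univ.filter fun i => h1.eigenvalues i ≤ x).card : ℝ) -
      ((Finset.univ.filter fun i => h2.eigenvalues i ≤ x).card : ℝ)| ≤
      2 * ((A - A').rank : ℝ) := by
    rw [abs_sub_le_iff]
    have r3 : (((S + A * Q * B * Qᴴ * A) - (S + A' * Q * B * Qᴴ * A')).rank : ℝ) ≤
        2 * ((A - A').rank : ℝ) := by exact_mod_cast hrank
    have r1 : ((Finset.univ.filter fun i => h1.eigenvalues i ≤ x).card : ℝ) ≤
        ((Finset.univ.filter fun i => h2.eigenvalues i ≤ x).card : ℝ) +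
        (((S + A * Q * B * Qᴴ * A) - (S + A' * Q * B * Qᴴ * A')).rank : ℝ) := by
      exact_mod_cast hc1
    have r2 : ((Finset.univ.filter fun i => h2.eigenvalues i ≤ x).card : ℝ) ≤
        ((Finset.univ.filter fun i => h1.eigenvalues i ≤ x).card : ℝ) +
        (((S + A * Q * B * Qᴴ * A) - (S + A' * Q * B * Qᴴ * A')).rank : ℝ) := by
      exact_mod_cast hc2
    constructor <;> linarith
  rcases Nat.eq_zero_or_pos N with hN | hN
  · have hz : (N : ℝ) = 0 := by rw [hN]; simp
    unfold esd
    rw [hz, div_zero, div_zero, div_zero, sub_zero, abs_zero]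
  · have hNpos : (0 : ℝ) < N := by exact_mod_cast hN
    unfold esd
    rw [div_sub_div_same, abs_div, abs_of_pos hNpos, div_le_div_iff₀ hNpos hNpos]
    have := mul_le_mul_of_nonneg_right habs hNpos.le
    linarith
end

section
/- Let f : (0,∞) → ℝ be given by f(P) = log det(I + c·e·R·P') where R is an n×n Hermitian positive definite matrix with eigenvalues d_1 ≥ … ≥ d_n, c, e > 0, and P' ranges over Hermitian positive semidefinite matrices with (1/n)·tr(P') ≤ P. Then the maximum of log det(I + c·e·R·P') over this constraint set is attained at a matrix P' that commutes with R (is codiagonalizable with R), whose eigenvalues p_i in the eigenbasis of R satisfy the water-filling form p_i = max(μ − 1/(c·e·d_i), 0) for a constant μ chosen so that (1/n)∑_i p_i = P. -/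
open Matrix
open scoped ComplexOrder

lemma trace_eq_sum_eig {n : Type*} [Fintype n] [DecidableEq n] {A : Matrix n n ℂ}
    (hA : A.IsHermitian) : A.trace = ∑ i, (hA.eigenvalues i : ℂ) := by
  conv_lhs => rw [hA.spectral_theorem]
  rw [Unitary.conjStarAlgAut_apply, trace_mul_comm, ← mul_assoc]
  simp [Matrix.trace_diagonal, SetLike.coe_mem, Unitary.coe_star_mul_self]

lemma psd_diag_entry {n : Type*} [Fintype n] [DecidableEq n] {M : Matrix n n ℂ}
    (hM : M.PosSemidef) (i : n) : 0 ≤ (M i i).re ∧ (M i i).im = 0 := by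
  have h := hM.dotProduct_mulVec_nonneg (Pi.single i 1)
  have he : dotProduct (star (Pi.single i 1 : _ → ℂ)) (M *ᵥ Pi.single i 1) = M i i := by
    simp [mulVec_single, dotProduct, Pi.single_apply, Finset.sum_ite_eq]
  rw [he] at h
  exact ⟨(RCLike.nonneg_iff.mp h).1, (RCLike.nonneg_iff.mp h).2⟩

lemma posDef_diag_entry {n : Type*} [Fintype n] [DecidableEq n] {M : Matrix n n ℂ}
    (hM : M.PosDef) (i : n) : 0 < (M i i).re ∧ (M i i).im = 0 := by
  have h := hM.dotProduct_mulVec_pos (x := Pi.single i 1) (by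
    intro h
    have := congrFun h i
    simp at this)
  have he : dotProduct (star (Pi.single i 1 : _ → ℂ)) (M *ᵥ Pi.single i 1) = M i i := by
    simp [mulVec_single, dotProduct, Pi.single_apply, Finset.sum_ite_eq]
  rw [he] at h
  exact ⟨(RCLike.pos_iff.mp h).1, (RCLike.pos_iff.mp h).2⟩

lemma hadamard_det {n : ℕ} (hn : 0 < n) {M : Matrix (Fin n) (Fin n) ℂ}
    (hM : M.PosDef) : (M.det).re ≤ ∏ i, (M i i).re := by
  set x : Fin n → ℝ := fun i => (M i i).re with hx
  have hx0 : ∀ i, 0 < x i := fun i => (posDef_diag_entry hM i).1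
  have hMii : ∀ i, M i i = ((x i : ℝ) : ℂ) := fun i =>
    Complex.ext rfl (posDef_diag_entry hM i).2
  set s : Fin n → ℝ := fun i => (Real.sqrt (x i))⁻¹ with hs
  have hs0 : ∀ i, 0 < s i := fun i => inv_pos.mpr (Real.sqrt_pos.mpr (hx0 i))
  have hss : ∀ i, s i * s i = (x i)⁻¹ := by
    intro i
    rw [hs]
    rw [← mul_inv, Real.mul_self_sqrt (hx0 i).le]
  set E : Matrix (Fin n) (Fin n) ℂ := diagonal (fun i => ((s i : ℝ) : ℂ)) with hE
  have hEH : Eᴴ = E := by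
    simp [hE, diagonal_conjTranspose, Pi.star_def, Complex.conj_ofReal]
  set N : Matrix (Fin n) (Fin n) ℂ := E * M * E with hN
  have hNpsd : N.PosSemidef := by
    have := hM.posSemidef.mul_mul_conjTranspose_same E
    rwa [hEH] at this
  have hNii : ∀ i, N i i = ((1:ℝ):ℂ) := by
    intro i
    rw [hN, mul_diagonal, diagonal_mul, hMii]
    push_cast
    rw [← Complex.ofReal_mul, ← Complex.ofReal_mul]
    norm_cast
    rw [mul_comm (s i) (x i), mul_assoc, hss i, mul_inv_cancel₀ (hx0 i).ne']
  set lam : Fin n → ℝ := hNpsd.1.eigenvalues with hlam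
  have hlam0 : ∀ i, 0 ≤ lam i := fun i => hNpsd.eigenvalues_nonneg i
  have htr : (∑ i, lam i) = n := by
    have h1 := trace_eq_sum_eig hNpsd.1
    have h2 : N.trace = ((n:ℝ):ℂ) := by
      rw [Matrix.trace]
      simp only [Matrix.diag]
      rw [Finset.sum_congr rfl (fun i _ => hNii i)]
      push_cast
      simp
    rw [h2] at h1
    have := h1.symm
    rw [← Complex.ofReal_sum] at this
    exact_mod_cast this
  set mu : Fin n → ℝ := hM.1.eigenvalues with hmu
  have hdetM : M.det = ((∏ i, mu i : ℝ):ℂ) := by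
    rw [hM.1.det_eq_prod_eigenvalues]
    push_cast
    rfl
  have hdetN : N.det = ((∏ i, lam i : ℝ):ℂ) := by
    rw [hNpsd.1.det_eq_prod_eigenvalues]
    push_cast
    rfl
  have hdetE : E.det = ((∏ i, s i : ℝ):ℂ) := by
    rw [hE, det_diagonal]
    push_cast
    rfl
  have hrel : (∏ i, s i) * (∏ i, mu i) * (∏ i, s i) = ∏ i, lam i := by
    have : N.det = E.det * M.det * E.det := by rw [hN, det_mul, det_mul]
    rw [hdetN, hdetE, hdetM] at this
    exact_mod_cast this.symm
  have hSS : (∏ i, s i) * (∏ i, s i) = (∏ i, x i)⁻¹ := by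
    rw [← Finset.prod_mul_distrib, ← Finset.prod_inv_distrib]
    exact Finset.prod_congr rfl (fun i _ => hss i)
  have hxprod : 0 < ∏ i, x i := Finset.prod_pos (fun i _ => hx0 i)
  have hmueq : (∏ i, mu i) = (∏ i, x i) * (∏ i, lam i) := by
    rw [← hrel]
    rw [show (∏ i, s i) * (∏ i, mu i) * (∏ i, s i)
        = ((∏ i, s i) * (∏ i, s i)) * (∏ i, mu i) by ring, hSS]
    field_simp
  have hlamprod : (∏ i, lam i) ≤ 1 := by
    have hw : ∀ i ∈ Finset.univ (α := Fin n), (0:ℝ) ≤ 1/n := by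
      intro i _
      positivity
    have hwsum : ∑ _i : Fin n, (1/n : ℝ) = 1 := by
      rw [Finset.sum_const]
      rw [Finset.card_univ, Fintype.card_fin, nsmul_eq_mul]
      field_simp
    have hgm := Real.geom_mean_le_arith_mean_weighted Finset.univ
      (fun _ => (1/n:ℝ)) lam hw hwsum (fun i _ => hlam0 i)
    rw [← Finset.mul_sum, htr] at hgm
    have hgm2 : (∏ i, lam i) ^ ((1:ℝ)/n) ≤ 1 := by
      rw [← Real.finset_prod_rpow Finset.univ lam (fun i _ => hlam0 i)]
      calc ∏ i, lam i ^ ((1:ℝ)/n) ≤ 1/n * n := hgm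
      _ = 1 := by field_simp
    have hnn : (0:ℝ) ≤ ∏ i, lam i := Finset.prod_nonneg (fun i _ => hlam0 i)
    have := Real.rpow_le_rpow (Real.rpow_nonneg hnn _) hgm2 (Nat.cast_nonneg n)
    rwa [← Real.rpow_mul hnn,
      one_div_mul_cancel (by exact_mod_cast hn.ne' : (n:ℝ) ≠ 0), Real.rpow_one,
      Real.one_rpow] at this
  have : (M.det).re = ∏ i, mu i := by rw [hdetM, Complex.ofReal_re]
  rw [this, hmueq]
  calc (∏ i, x i) * (∏ i, lam i) ≤ (∏ i, x i) * 1 :=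
    mul_le_mul_of_nonneg_left hlamprod hxprod.le
  _ = ∏ i, (M i i).re := by rw [mul_one]

lemma key_ineq (a t pp μ : ℝ) (ha : 0 < a) (ht : 0 ≤ t) (hμ : 0 < μ)
    (hp : pp = max (μ - 1/a) 0) :
    Real.log (1 + a*t) ≤ Real.log (1 + a*pp) + (t - pp)/μ := by
  have h1t : (0:ℝ) < 1 + a*t := by positivity
  rcases le_or_gt (μ - 1/a) 0 with h | h
  · have hpp : pp = 0 := by rw [hp, max_eq_right h]
    subst hpp
    have hlog : Real.log (1 + a*t) ≤ a*t := by
      have := Real.log_le_sub_one_of_pos h1t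
      linarith
    have haμ : a * μ ≤ 1 := by
      have : μ ≤ 1/a := by linarith
      calc a * μ ≤ a * (1/a) := by nlinarith
      _ = 1 := by field_simp
    have : a * t ≤ t / μ := by
      rw [le_div_iff₀ hμ]
      nlinarith
    simp only [mul_zero, add_zero, Real.log_one, zero_add, sub_zero]
    linarith
  · have hpp : pp = μ - 1/a := by rw [hp, max_eq_left h.le]
    have h1p : 1 + a * pp = a * μ := by
      rw [hpp]
      field_simp
      ring
    have haμ : 0 < a * μ := by positivity
    have hlog2 : Real.log (1 + a*t) - Real.log (a*μ) ≤ (1 + a*t)/(a*μ) - 1 := by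
      rw [← Real.log_div h1t.ne' haμ.ne']
      exact Real.log_le_sub_one_of_pos (by positivity)
    have harith : (1 + a*t)/(a*μ) - 1 = (t - pp)/μ := by
      rw [hpp]
      field_simp
      ring
    rw [h1p]
    linarith

lemma exists_mu {n : ℕ} (hn : 0 < n) (a : Fin n → ℝ) (ha : ∀ i, 0 < a i)
    (S : ℝ) (hS : 0 < S) :
    ∃ μ : ℝ, 0 < μ ∧ ∑ i, max (μ - 1/(a i)) 0 = S := by
  set g : ℝ → ℝ := fun μ => ∑ i, max (μ - 1/(a i)) 0 with hg
  have hcont : Continuous g :=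
    continuous_finset_sum _ fun i _ => ((continuous_id.sub continuous_const).max continuous_const)
  have hg0 : g 0 = 0 := by
    rw [hg]
    simp only
    rw [Finset.sum_eq_zero]
    intro i _
    rw [max_eq_right]
    have := ha i
    have : 0 < 1/(a i) := by positivity
    linarith
  set M0 : ℝ := S + ∑ j, 1/(a j) with hM0
  have hMnn : 0 ≤ M0 := by
    rw [hM0]
    have : 0 ≤ ∑ j, 1/(a j) := Finset.sum_nonneg fun j _ => by have := ha j; positivity
    linarith
  have hgM : S ≤ g M0 := by
    have h1 : ∑ i, (M0 - 1/(a i)) ≤ g M0 :=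
      Finset.sum_le_sum fun i _ => le_max_left _ _
    have h2 : ∑ i, (M0 - 1/(a i)) = n * M0 - ∑ i, 1/(a i) := by
      rw [Finset.sum_sub_distrib, Finset.sum_const, Finset.card_univ, Fintype.card_fin,
        nsmul_eq_mul]
    have hn1 : (1:ℝ) ≤ n := by exact_mod_cast hn
    have hsum : 0 ≤ ∑ j, 1/(a j) := Finset.sum_nonneg fun j _ => by have := ha j; positivity
    nlinarith [h1, h2]
  have hIcc : S ∈ Set.Icc (g 0) (g M0) := ⟨by rw [hg0]; exact hS.le, hgM⟩
  obtain ⟨μ, -, hμS⟩ := intermediate_value_Icc hMnn hcont.continuousOn hIcc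
  refine ⟨μ, ?_, hμS⟩
  by_contra hle
  push_neg at hle
  have : g μ = 0 := by
    rw [hg]
    simp only
    rw [Finset.sum_eq_zero]
    intro i _
    rw [max_eq_right]
    have := ha i
    have : 0 < 1/(a i) := by positivity
    linarith
  rw [hμS] at this
  linarith

/-- Water-filling: the maximum of `log det (I + c e R P')` over Hermitian positive
semidefinite `P'` with `(1/n) tr P' ≤ P` is attained at a matrix commuting with `R`,
whose eigenvalues in the eigenbasis of `R` have the water-filling form
`p_i = max (μ - 1/(c e d_i)) 0`, with `μ` such that `(1/n) ∑ p_i = P`. -/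
theorem waterfilling_maximizer {n : ℕ} (hn : 0 < n) (R : Matrix (Fin n) (Fin n) ℂ)
    (hR : R.PosDef) (c e P : ℝ) (hc : 0 < c) (he : 0 < e) (hP : 0 < P) :
    ∃ P' : Matrix (Fin n) (Fin n) ℂ, P'.PosSemidef ∧
      (1 / n : ℝ) * (Matrix.trace P').re ≤ P ∧
      R * P' = P' * R ∧
      (∀ Q : Matrix (Fin n) (Fin n) ℂ, Q.PosSemidef →
        (1 / n : ℝ) * (Matrix.trace Q).re ≤ P →
        Real.log ((Matrix.det (1 + ((c * e : ℝ) : ℂ) • (R * Q))).re)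
          ≤ Real.log ((Matrix.det (1 + ((c * e : ℝ) : ℂ) • (R * P'))).re)) ∧
      ∃ μ : ℝ, ∃ p : Fin n → ℝ,
        (∀ i, p i = max (μ - 1 / (c * e * hR.1.eigenvalues i)) 0) ∧
        (1 / n : ℝ) * ∑ i, p i = P ∧
        P' = (hR.1.eigenvectorUnitary : Matrix (Fin n) (Fin n) ℂ) *
            Matrix.diagonal (fun i => (p i : ℂ)) *
            star (hR.1.eigenvectorUnitary : Matrix (Fin n) (Fin n) ℂ) := by
  have hn' : (0:ℝ) < n := by exact_mod_cast hn
  set d : Fin n → ℝ := hR.1.eigenvalues with hd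
  have hd0 : ∀ i, 0 < d i := fun i => hR.eigenvalues_pos i
  set a : Fin n → ℝ := fun i => c * e * d i with ha
  have ha0 : ∀ i, 0 < a i := fun i => by have := hd0 i; rw [ha]; positivity
  obtain ⟨μ, hμ0, hμS⟩ := exists_mu hn a ha0 (n * P) (by positivity)
  set p : Fin n → ℝ := fun i => max (μ - 1/(a i)) 0 with hp
  have hp0 : ∀ i, 0 ≤ p i := fun i => le_max_right _ _
  set U : Matrix (Fin n) (Fin n) ℂ := (hR.1.eigenvectorUnitary : Matrix (Fin n) (Fin n) ℂ)
    with hU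
  have hU1 : U * star U = 1 := Unitary.coe_mul_star_self _
  have hU2 : star U * U = 1 := Unitary.coe_star_mul_self _
  set D : Matrix (Fin n) (Fin n) ℂ := diagonal (fun i => ((d i : ℝ) : ℂ)) with hD
  have hspec : R = U * D * star U := by
    have := hR.1.spectral_theorem
    rw [Unitary.conjStarAlgAut_apply] at this
    exact this
  set Dp : Matrix (Fin n) (Fin n) ℂ := diagonal (fun i => ((p i : ℝ) : ℂ)) with hDp
  set P' : Matrix (Fin n) (Fin n) ℂ := U * Dp * star U with hP'
  -- sandwich identities
  have sandwich_mul : ∀ X Y : Matrix (Fin n) (Fin n) ℂ,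
      (U * X * star U) * (U * Y * star U) = U * (X * Y) * star U := by
    intro X Y
    have h1 : (U * X * star U) * (U * Y * star U)
        = U * (X * ((star U * U) * (Y * star U))) := by
      simp only [Matrix.mul_assoc]
    rw [h1, hU2, Matrix.one_mul]
    simp only [Matrix.mul_assoc]
  have hone : U * 1 * star U = 1 := by rw [Matrix.mul_one, hU1]
  have det_sandwich : ∀ X : Matrix (Fin n) (Fin n) ℂ,
      (U * X * star U).det = X.det := by
    intro X
    rw [det_mul, det_mul]
    have h1 : U.det * (star U).det = 1 := by
      rw [← det_mul, hU1, det_one]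
    calc U.det * X.det * (star U).det = X.det * (U.det * (star U).det) := by ring
    _ = X.det := by rw [h1, mul_one]
  have trace_sandwich : ∀ X : Matrix (Fin n) (Fin n) ℂ,
      (U * X * star U).trace = X.trace := by
    intro X
    rw [trace_mul_comm, ← Matrix.mul_assoc, hU2, Matrix.one_mul]
  -- smul sandwich
  have smul_sandwich : ∀ (z : ℂ) (X : Matrix (Fin n) (Fin n) ℂ),
      z • (U * X * star U) = U * (z • X) * star U := by
    intro z X
    rw [Matrix.mul_smul, Matrix.smul_mul]
  -- P' PSD
  have hP'psd : P'.PosSemidef := by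
    have hdiag : Dp.PosSemidef := by
      rw [hDp]
      refine posSemidef_diagonal_iff.mpr fun i => ?_
      exact_mod_cast hp0 i
    have := hdiag.mul_mul_conjTranspose_same U
    rwa [hP', Matrix.star_eq_conjTranspose]
  -- trace of P'
  have htraceP' : (Matrix.trace P').re = ∑ i, p i := by
    rw [hP', trace_sandwich, hDp, trace_diagonal]
    rw [← Complex.ofReal_sum, Complex.ofReal_re]
  -- R * P' commute
  have hRP' : R * P' = U * (D * Dp) * star U := by
    rw [hspec, hP', sandwich_mul]
  have hcomm : R * P' = P' * R := by
    have hDcomm : D * Dp = Dp * D := by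
      rw [hD, hDp, diagonal_mul_diagonal, diagonal_mul_diagonal]
      simp [mul_comm]
    rw [hspec, hP', sandwich_mul, sandwich_mul, hDcomm]
  -- determinant at P'
  have hdetP' : (Matrix.det (1 + ((c * e : ℝ) : ℂ) • (R * P'))) =
      ((∏ i, (1 + a i * p i) : ℝ) : ℂ) := by
    rw [hRP', smul_sandwich, ← hone]
    rw [show U * 1 * star U + U * (((c*e:ℝ):ℂ) • (D * Dp)) * star U
        = U * (1 + ((c*e:ℝ):ℂ) • (D * Dp)) * star U by
      rw [Matrix.mul_add, Matrix.add_mul]]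
    rw [det_sandwich]
    rw [hD, hDp, diagonal_mul_diagonal]
    rw [show ((c*e:ℝ):ℂ) • diagonal (fun i => ((d i:ℝ):ℂ) * ((p i:ℝ):ℂ))
        = diagonal (fun i => ((c*e:ℝ):ℂ) * (((d i:ℝ):ℂ) * ((p i:ℝ):ℂ))) by
      rw [← diagonal_smul]
      congr 1]
    rw [show (1 : Matrix (Fin n) (Fin n) ℂ) = diagonal (fun _ => (1:ℂ)) by
      rw [diagonal_one]]
    rw [diagonal_add, det_diagonal]
    push_cast
    congr 1
    funext i
    rw [ha]
    push_cast
    ring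
  have hdetP're : (Matrix.det (1 + ((c * e : ℝ) : ℂ) • (R * P'))).re
      = ∏ i, (1 + a i * p i) := by rw [hdetP', Complex.ofReal_re]
  have h1ap : ∀ i, (0:ℝ) < 1 + a i * p i := fun i => by
    have := ha0 i; have := hp0 i; positivity
  refine ⟨P', hP'psd, ?_, hcomm, ?_, μ, p, fun i => rfl, ?_, rfl⟩
  · rw [htraceP', hμS]
    rw [show (1/n : ℝ) * (n * P) = P by field_simp]
  · -- optimality
    intro Q hQ hQtr
    set B : Matrix (Fin n) (Fin n) ℂ := star U * Q * U with hB
    have hBpsd : B.PosSemidef := by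
      have := hQ.conjTranspose_mul_mul_same U
      rwa [hB, Matrix.star_eq_conjTranspose]
    set t : Fin n → ℝ := fun i => (B i i).re with ht
    have ht0 : ∀ i, 0 ≤ t i := fun i => (psd_diag_entry hBpsd i).1
    have hBii : ∀ i, B i i = ((t i : ℝ) : ℂ) := fun i =>
      Complex.ext rfl (psd_diag_entry hBpsd i).2
    have htsum : ∑ i, t i = (Matrix.trace Q).re := by
      have h1 : B.trace = Q.trace := by
        rw [hB, trace_mul_comm, ← Matrix.mul_assoc, hU1, Matrix.one_mul]
      have h2 : B.trace = ((∑ i, t i : ℝ) : ℂ) := by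
        rw [Matrix.trace]
        simp only [Matrix.diag]
        rw [Finset.sum_congr rfl (fun i _ => hBii i), ← Complex.ofReal_sum]
      rw [h1] at h2
      rw [h2, Complex.ofReal_re]
    have htle : ∑ i, t i ≤ n * P := by
      rw [htsum]
      rw [show (1/n : ℝ) * (Matrix.trace Q).re ≤ P ↔ (Matrix.trace Q).re ≤ n * P by
        rw [div_mul_eq_mul_div, one_mul, div_le_iff₀ hn']
        constructor <;> intro h <;> nlinarith] at hQtr
      exact hQtr
    -- the matrix M
    set A : Matrix (Fin n) (Fin n) ℂ := diagonal (fun i => ((Real.sqrt (a i) : ℝ) : ℂ))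
      with hA
    have hAH : Aᴴ = A := by
      simp [hA, diagonal_conjTranspose, Pi.star_def, Complex.conj_ofReal]
    have hAA : A * A = ((c*e:ℝ):ℂ) • D := by
      rw [hA, hD, diagonal_mul_diagonal, ← diagonal_smul]
      refine congrArg diagonal (funext fun i => ?_)
      rw [Pi.smul_apply, smul_eq_mul, ← Complex.ofReal_mul, Real.mul_self_sqrt (ha0 i).le,
        ← Complex.ofReal_mul]
    set M : Matrix (Fin n) (Fin n) ℂ := 1 + A * B * A with hM
    have hMpos : M.PosDef := by
      have hABA : (A * B * A).PosSemidef := by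
        have := hBpsd.mul_mul_conjTranspose_same A
        rwa [hAH] at this
      have := Matrix.PosDef.posSemidef_add hABA Matrix.PosDef.one
      rwa [hM, add_comm]
    -- det equality
    have hQeq : Q = U * B * star U := by
      rw [hB]
      have : U * (star U * Q * U) * star U = (U * star U) * Q * (U * star U) := by
        simp only [Matrix.mul_assoc]
      rw [this, hU1, Matrix.one_mul, Matrix.mul_one]
    have hRQ : R * Q = U * (D * B) * star U := by
      conv_lhs => rw [hspec, hQeq]
      rw [sandwich_mul]
    have hdetQ : (Matrix.det (1 + ((c * e : ℝ) : ℂ) • (R * Q))) = M.det := by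
      rw [hRQ, smul_sandwich, ← hone]
      rw [show U * 1 * star U + U * (((c*e:ℝ):ℂ) • (D * B)) * star U
          = U * (1 + ((c*e:ℝ):ℂ) • (D * B)) * star U by
        rw [Matrix.mul_add, Matrix.add_mul]]
      rw [det_sandwich]
      rw [show ((c*e:ℝ):ℂ) • (D * B) = (((c*e:ℝ):ℂ) • D) * B by
        rw [Matrix.smul_mul]]
      rw [← hAA, hM]
      rw [show A * A * B = A * (A * B) by rw [Matrix.mul_assoc]]
      rw [det_one_add_mul_comm]
    -- diagonal entries of M
    have hMii : ∀ i, M i i = ((1 + a i * t i : ℝ) : ℂ) := by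
      intro i
      rw [hM, Matrix.add_apply, one_apply_eq, hA, mul_diagonal, diagonal_mul, hBii]
      have hre : Real.sqrt (a i) * t i * Real.sqrt (a i) = a i * t i := by
        rw [mul_comm (Real.sqrt (a i)) (t i), mul_assoc, Real.mul_self_sqrt (ha0 i).le]
        ring
      push_cast
      rw [show ((Real.sqrt (a i) : ℝ) : ℂ) * ((t i : ℝ) : ℂ) * ((Real.sqrt (a i) : ℝ) : ℂ)
          = (((Real.sqrt (a i) * t i * Real.sqrt (a i) : ℝ)) : ℂ) by push_cast; ring, hre]
      push_cast
      ring
    have hdetMre : (0:ℝ) < (M.det).re := (RCLike.pos_iff.mp hMpos.det_pos).1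
    have hhad := hadamard_det hn hMpos
    have hprodt : ∏ i, (M i i).re = ∏ i, (1 + a i * t i) := by
      refine Finset.prod_congr rfl fun i _ => ?_
      rw [hMii i, Complex.ofReal_re]
    rw [hprodt] at hhad
    have h1at : ∀ i, (0:ℝ) < 1 + a i * t i := fun i => by
      have := ha0 i; have := ht0 i; positivity
    -- the scalar comparison
    have hsums : ∑ i, Real.log (1 + a i * t i) ≤ ∑ i, Real.log (1 + a i * p i) := by
      have hterm : ∀ i ∈ Finset.univ (α := Fin n),
          Real.log (1 + a i * t i) ≤ Real.log (1 + a i * p i) + (t i - p i)/μ :=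
        fun i _ => key_ineq (a i) (t i) (p i) μ (ha0 i) (ht0 i) hμ0 rfl
      have hsum := Finset.sum_le_sum hterm
      rw [Finset.sum_add_distrib] at hsum
      have hpsum : ∑ i, p i = n * P := hμS
      have hcorr : ∑ i, (t i - p i)/μ ≤ 0 := by
        rw [← Finset.sum_div, Finset.sum_sub_distrib]
        apply div_nonpos_of_nonpos_of_nonneg _ hμ0.le
        rw [hpsum]
        linarith
      linarith
    -- conclude
    rw [hdetP're, congrArg Complex.re hdetQ]
    calc Real.log ((M.det).re) ≤ Real.log (∏ i, (1 + a i * t i)) :=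
          Real.log_le_log hdetMre hhad
    _ = ∑ i, Real.log (1 + a i * t i) :=
          Real.log_prod (fun i _ => (h1at i).ne')
    _ ≤ ∑ i, Real.log (1 + a i * p i) := hsums
    _ = Real.log (∏ i, (1 + a i * p i)) :=
          (Real.log_prod (fun i _ => (h1ap i).ne')).symm
  · rw [show ∑ i, p i = (n:ℝ) * P from hμS]
    field_simp
end
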